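/- arXiv:0709.1151 — 4 statements merged into one kernel-verified Lean document; each statement's English description precedes it below -/
import Mathlib

section
/- Let I ⊆ ℝ be an open interval and let f, g : I → ℝ be smooth with f > 0 and g' > 0 on I, and suppose f and g satisfy Eq. (I) and Eq. (II) on I. Let k₁, k₂ ∈ ℝ and k₃ ≠ 0, and let U : ℝ × ℝ → ℝ be smooth and satisfy the uniform beam equation ∂²U/∂T² + ∂⁴U/∂X⁴ = 0 on all of ℝ². Then the function u(t,x) := U(t + k₁, g(x) + k₂) / (k₃·√(f(x)·g'(x)³)) satisfies the Euler–Bernoulli equation ∂²/∂x²( f(x)·∂²u/∂x² ) + g'(x)⁴·f(x)·∂²u/∂t² = 0 at every point of ℝ × I. -/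
/-- Eq. (I): `g''' = (3/10)·g'·(f')²/f² − (2/5)·g'·f''/f + (3/2)·(g'')²/g'`. -/
def SatEqI (f g : ℝ → ℝ) (x : ℝ) : Prop :=
  (deriv^[3] g x) =
    (3/10) * deriv g x * (deriv f x)^2 / (f x)^2
      - (2/5) * deriv g x * (deriv^[2] f x) / f x
      + (3/2) * (deriv^[2] g x)^2 / deriv g x

/-- Eq. (II): `f'''' = f'·f'''/f + (11/10)·(f'')²/f − (12/5)·(f')²·f''/f² + (9/10)·(f')⁴/f³`. -/
def SatEqII (f : ℝ → ℝ) (x : ℝ) : Prop :=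
  (deriv^[4] f x) =
    deriv f x * (deriv^[3] f x) / f x
      + (11/10) * (deriv^[2] f x)^2 / f x
      - (12/5) * (deriv f x)^2 * (deriv^[2] f x) / (f x)^2
      + (9/10) * (deriv f x)^4 / (f x)^3

/-- Iterated derivatives of a smooth function on an open set are smooth on it. -/
theorem contDiffOn_iterate_deriv (I : Set ℝ) (hI : IsOpen I) (f : ℝ → ℝ)
    (hf : ContDiffOn ℝ (⊤ : ℕ∞) f I) :
    ∀ n : ℕ, ContDiffOn ℝ (⊤ : ℕ∞) (deriv^[n] f) I := by
  intro n
  induction n with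
  | zero => exact hf
  | succ n ih =>
    rw [Function.iterate_succ_apply']
    exact ((contDiffOn_infty_iff_deriv_of_isOpen hI).mp ih).2

theorem hasDerivAt_iterate_deriv (I : Set ℝ) (hI : IsOpen I) (f : ℝ → ℝ)
    (hf : ContDiffOn ℝ (⊤ : ℕ∞) f I) (n : ℕ) :
    ∀ y ∈ I, HasDerivAt (deriv^[n] f) (deriv^[n + 1] f y) y := by
  intro y hy
  have h1 : ContDiffOn ℝ (⊤ : ℕ∞) (deriv^[n] f) I := contDiffOn_iterate_deriv I hI f hf n
  have h2 : DifferentiableOn ℝ (deriv^[n] f) I :=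
    h1.differentiableOn (by simp)
  have h3 : DifferentiableAt ℝ (deriv^[n] f) y := h2.differentiableAt (hI.mem_nhds hy)
  rw [Function.iterate_succ_apply']
  exact h3.hasDerivAt

theorem hasDerivAt_iteratedDeriv_comp (I : Set ℝ) (hI : IsOpen I) (g : ℝ → ℝ)
    (hg : ContDiffOn ℝ (⊤ : ℕ∞) g I) (h : ℝ → ℝ) (hh : ContDiff ℝ (⊤ : ℕ∞) h)
    (k₂ : ℝ) (i : ℕ) :
    ∀ y ∈ I, HasDerivAt (fun z => iteratedDeriv i h (g z + k₂))
      (iteratedDeriv (i + 1) h (g y + k₂) * deriv g y) y := by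
  intro y hy
  have hinner : HasDerivAt (fun z => g z + k₂) (deriv g y) y := by
    have := hasDerivAt_iterate_deriv I hI g hg 0 y hy
    simpa using this.add_const k₂
  have hsm : ContDiff ℝ (⊤ : ℕ∞) (deriv^[i] h) := hh.iterate_deriv i
  have houter : HasDerivAt (deriv^[i] h) (deriv^[i + 1] h (g y + k₂)) (g y + k₂) := by
    have h3 : DifferentiableAt ℝ (deriv^[i] h) (g y + k₂) :=
      (hsm.differentiable (by simp)).differentiableAt
    rw [Function.iterate_succ_apply']
    exact h3.hasDerivAt
  have := houter.comp y hinner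
  simp only [Function.comp_def] at this
  rw [iteratedDeriv_eq_iterate, iteratedDeriv_eq_iterate]
  exact this

set_option maxHeartbeats 4000000 in
theorem core_calc (I : Set ℝ) (hIopen : IsOpen I)
    (a0 a1 a2 a3 a4 b1 b2 b3 b4 b5 H0 H1 H2 H3 H4 P : ℝ → ℝ)
    (ha0 : ∀ y ∈ I, HasDerivAt a0 (a1 y) y)
    (ha1 : ∀ y ∈ I, HasDerivAt a1 (a2 y) y)
    (ha2 : ∀ y ∈ I, HasDerivAt a2 (a3 y) y)
    (ha3 : ∀ y ∈ I, HasDerivAt a3 (a4 y) y)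
    (hb1 : ∀ y ∈ I, HasDerivAt b1 (b2 y) y)
    (hb2 : ∀ y ∈ I, HasDerivAt b2 (b3 y) y)
    (hb3 : ∀ y ∈ I, HasDerivAt b3 (b4 y) y)
    (hb4 : ∀ y ∈ I, HasDerivAt b4 (b5 y) y)
    (hH0 : ∀ y ∈ I, HasDerivAt H0 (H1 y * b1 y) y)
    (hH1 : ∀ y ∈ I, HasDerivAt H1 (H2 y * b1 y) y)
    (hH2 : ∀ y ∈ I, HasDerivAt H2 (H3 y * b1 y) y)
    (hH3 : ∀ y ∈ I, HasDerivAt H3 (H4 y * b1 y) y)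
    (hP : ∀ y ∈ I, HasDerivAt P ((-3/2 : ℝ) * (b2 y * P y * (b1 y)⁻¹) + (-1/2 : ℝ) * (a1 y * P y * (a0 y)⁻¹)) y)
    (ha0ne : ∀ y ∈ I, a0 y ≠ 0) (hb1ne : ∀ y ∈ I, b1 y ≠ 0)
    (heqI : ∀ y ∈ I, b3 y = (3/2 : ℝ) * (b2 y ^ 2 * (b1 y)⁻¹) + (-2/5 : ℝ) * (a2 y * b1 y * (a0 y)⁻¹) + (3/10 : ℝ) * (a1 y ^ 2 * b1 y * (a0 y)⁻¹ ^ 2))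
    (heqII : ∀ y ∈ I, a4 y = (11/10 : ℝ) * (a2 y ^ 2 * (a0 y)⁻¹) + a1 y * a3 y * (a0 y)⁻¹ + (-12/5 : ℝ) * (a1 y ^ 2 * a2 y * (a0 y)⁻¹ ^ 2) + (9/10 : ℝ) * (a1 y ^ 4 * (a0 y)⁻¹ ^ 3))
    (x : ℝ) (hx : x ∈ I) :
    deriv (deriv (fun y => a0 y * deriv (deriv (fun z => H0 z * P z)) y)) x
      = a0 x * b1 x ^ 4 * H4 x * P x := by
  have hiA : ∀ y ∈ I, HasDerivAt (fun z => (a0 z)⁻¹) ((-1 : ℝ) * (a1 y * (a0 y)⁻¹ ^ 2)) y := by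
    intro y hy
    exact ((ha0 y hy).inv (ha0ne y hy)).congr_deriv (by field_simp)
  have hiB : ∀ y ∈ I, HasDerivAt (fun z => (b1 z)⁻¹) ((-1 : ℝ) * (b2 y * (b1 y)⁻¹ ^ 2)) y := by
    intro y hy
    exact ((hb1 y hy).inv (hb1ne y hy)).congr_deriv (by field_simp)
  have hd1 : ∀ y ∈ I, HasDerivAt (fun z => H0 z * P z) ((-3/2 : ℝ) * (b2 y * H0 y * P y * (b1 y)⁻¹) + b1 y * H1 y * P y + (-1/2 : ℝ) * (a1 y * H0 y * P y * (a0 y)⁻¹)) y := by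
    intro y hy
    exact ((hH0 y hy).mul (hP y hy)).congr_deriv (by push_cast; ring)
  have hd2 : ∀ y ∈ I, HasDerivAt (fun z => (-3/2 : ℝ) * (b2 z * H0 z * P z * (b1 z)⁻¹) + b1 z * H1 z * P z + (-1/2 : ℝ) * (a1 z * H0 z * P z * (a0 z)⁻¹)) ((-3/2 : ℝ) * (b3 y * H0 y * P y * (b1 y)⁻¹) + b2 y * H1 y * P y + (15/4 : ℝ) * (b2 y ^ 2 * H0 y * P y * (b1 y)⁻¹ ^ 2) + (-3 : ℝ) * (b1 y * b2 y * H1 y * P y * (b1 y)⁻¹) + b1 y ^ 2 * H2 y * P y + (-1/2 : ℝ) * (a2 y * H0 y * P y * (a0 y)⁻¹) + (3/2 : ℝ) * (a1 y * b2 y * H0 y * P y * (a0 y)⁻¹ * (b1 y)⁻¹) + (-1 : ℝ) * (a1 y * b1 y * H1 y * P y * (a0 y)⁻¹) + (3/4 : ℝ) * (a1 y ^ 2 * H0 y * P y * (a0 y)⁻¹ ^ 2)) y := by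
    intro y hy
    exact ((((((((hb2 y hy).mul (hH0 y hy)).mul (hP y hy)).mul (hiB y hy)).const_mul (-3/2 : ℝ)).add (((hb1 y hy).mul (hH1 y hy)).mul (hP y hy))).add (((((ha1 y hy).mul (hH0 y hy)).mul (hP y hy)).mul (hiA y hy)).const_mul (-1/2 : ℝ)))).congr_deriv (by push_cast [Pi.mul_apply, Pi.pow_apply]; ring)
  have hd3 : ∀ y ∈ I, HasDerivAt (fun z => a0 z * ((-3/2 : ℝ) * (b3 z * H0 z * P z * (b1 z)⁻¹) + b2 z * H1 z * P z + (15/4 : ℝ) * (b2 z ^ 2 * H0 z * P z * (b1 z)⁻¹ ^ 2) + (-3 : ℝ) * (b1 z * b2 z * H1 z * P z * (b1 z)⁻¹) + b1 z ^ 2 * H2 z * P z + (-1/2 : ℝ) * (a2 z * H0 z * P z * (a0 z)⁻¹) + (3/2 : ℝ) * (a1 z * b2 z * H0 z * P z * (a0 z)⁻¹ * (b1 z)⁻¹) + (-1 : ℝ) * (a1 z * b1 z * H1 z * P z * (a0 z)⁻¹) + (3/4 : ℝ) * (a1 z ^ 2 * H0 z * P z * (a0 z)⁻¹ ^ 2)))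 ((-3/2 : ℝ) * (a1 y * b3 y * H0 y * P y * (b1 y)⁻¹) + a1 y * b2 y * H1 y * P y + (15/4 : ℝ) * (a1 y * b2 y ^ 2 * H0 y * P y * (b1 y)⁻¹ ^ 2) + (-3 : ℝ) * (a1 y * b1 y * b2 y * H1 y * P y * (b1 y)⁻¹) + a1 y * b1 y ^ 2 * H2 y * P y + (-1/2 : ℝ) * (a1 y * a2 y * H0 y * P y * (a0 y)⁻¹) + (3/2 : ℝ) * (a1 y ^ 2 * b2 y * H0 y * P y * (a0 y)⁻¹ * (b1 y)⁻¹) + (-1 : ℝ) * (a1 y ^ 2 * b1 y * H1 y * P y * (a0 y)⁻¹) + (3/4 : ℝ) * (a1 y ^ 3 * H0 y * P y * (a0 y)⁻¹ ^ 2) + (-3/2 : ℝ) * (a0 y * b4 y * H0 y * P y * (b1 y)⁻¹) + a0 y * b3 y * H1 y * P y + (45/4 : ℝ) * (a0 y * b2 y * b3 y * H0 y * P y * (b1 y)⁻¹ ^ 2) + (-9/2 : ℝ) * (a0 y * b2 y ^ 2 * H1 y * P y * (b1 y)⁻¹) + (-105/8 : ℝ) * (a0 y * b2 y ^ 3 *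 H0 y * P y * (b1 y)⁻¹ ^ 3) + (-9/2 : ℝ) * (a0 y * b1 y * b3 y * H1 y * P y * (b1 y)⁻¹) + (3 : ℝ) * (a0 y * b1 y * b2 y * H2 y * P y) + (45/4 : ℝ) * (a0 y * b1 y * b2 y ^ 2 * H1 y * P y * (b1 y)⁻¹ ^ 2) + (-9/2 : ℝ) * (a0 y * b1 y ^ 2 * b2 y * H2 y * P y * (b1 y)⁻¹) + a0 y * b1 y ^ 3 * H3 y * P y + (-1/2 : ℝ) * (a0 y * a3 y * H0 y * P y * (a0 y)⁻¹) + (9/4 : ℝ) * (a0 y * a2 y * b2 y * H0 y * P y * (a0 y)⁻¹ * (b1 y)⁻¹) + (-3/2 : ℝ) * (a0 y * a2 y * b1 y * H1 y * P y * (a0 y)⁻¹) + (9/4 : ℝ) * (a0 y * a1 y * b3 y * H0 y * P y * (a0 y)⁻¹ * (b1 y)⁻¹) + (-3/2 : ℝ) * (a0 y * a1 y * b2 y * H1 y * P y * (a0 y)⁻¹) + (-45/8 : ℝ) * (a0 y * a1 y * b2 y ^ 2 * H0 y * P y * (a0 y)⁻¹ * (b1 y)⁻¹ ^ 2) + (9/2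 : ℝ) * (a0 y * a1 y * b1 y * b2 y * H1 y * P y * (a0 y)⁻¹ * (b1 y)⁻¹) + (-3/2 : ℝ) * (a0 y * a1 y * b1 y ^ 2 * H2 y * P y * (a0 y)⁻¹) + (9/4 : ℝ) * (a0 y * a1 y * a2 y * H0 y * P y * (a0 y)⁻¹ ^ 2) + (-27/8 : ℝ) * (a0 y * a1 y ^ 2 * b2 y * H0 y * P y * (a0 y)⁻¹ ^ 2 * (b1 y)⁻¹) + (9/4 : ℝ) * (a0 y * a1 y ^ 2 * b1 y * H1 y * P y * (a0 y)⁻¹ ^ 2) + (-15/8 : ℝ) * (a0 y * a1 y ^ 3 * H0 y * P y * (a0 y)⁻¹ ^ 3)) y := by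
    intro y hy
    exact ((ha0 y hy).mul ((((((((((((((hb3 y hy).mul (hH0 y hy)).mul (hP y hy)).mul (hiB y hy)).const_mul (-3/2 : ℝ)).add (((hb2 y hy).mul (hH1 y hy)).mul (hP y hy))).add ((((((hb2 y hy).pow 2).mul (hH0 y hy)).mul (hP y hy)).mul ((hiB y hy).pow 2)).const_mul (15/4 : ℝ))).add ((((((hb1 y hy).mul (hb2 y hy)).mul (hH1 y hy)).mul (hP y hy)).mul (hiB y hy)).const_mul (-3 : ℝ))).add ((((hb1 y hy).pow 2).mul (hH2 y hy)).mul (hP y hy))).add (((((ha2 y hy).mul (hH0 y hy)).mul (hP y hy)).mul (hiA y hy)).const_mul (-1/2 : ℝ))).add (((((((ha1 y hy).mul (hb2 y hy)).mul (hH0 y hy)).mul (hP y hy)).mul (hiA y hy)).mul (hiB y hy)).const_mul (3/2 : ℝ))).add ((((((ha1 y hy).mul (hb1 y hy)).mul (hH1 y hy)).mul (hP y hy)).mul (hiA y hy)).const_mul (-1 : ℝ))).add ((((((ha1 y hy).pow 2).mul (hH0 y hy)).mul (hP y hy)).mul ((hiA y hy).pow 2)).const_mul (3/4 : ℝ))))).congr_deriv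 (by push_cast [Pi.mul_apply, Pi.pow_apply, Pi.add_apply]; ring)
  have hd4 : ∀ y ∈ I, HasDerivAt (fun z => (-3/2 : ℝ) * (a1 z * b3 z * H0 z * P z * (b1 z)⁻¹) + a1 z * b2 z * H1 z * P z + (15/4 : ℝ) * (a1 z * b2 z ^ 2 * H0 z * P z * (b1 z)⁻¹ ^ 2) + (-3 : ℝ) * (a1 z * b1 z * b2 z * H1 z * P z * (b1 z)⁻¹) + a1 z * b1 z ^ 2 * H2 z * P z + (-1/2 : ℝ) * (a1 z * a2 z * H0 z * P z * (a0 z)⁻¹) + (3/2 : ℝ) * (a1 z ^ 2 * b2 z * H0 z * P z * (a0 z)⁻¹ * (b1 z)⁻¹) + (-1 : ℝ) * (a1 z ^ 2 * b1 z * H1 z * P z * (a0 z)⁻¹) + (3/4 : ℝ) * (a1 z ^ 3 * H0 z * P z * (a0 z)⁻¹ ^ 2) + (-3/2 : ℝ) * (a0 z * b4 z * H0 z * P z * (b1 z)⁻¹) + a0 z * b3 z * H1 z * P z + (45/4 : ℝ) * (a0 z * b2 z * b3 z * H0 z * P z * (b1 z)⁻¹ ^ 2) + (-9/2 : ℝ)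 * (a0 z * b2 z ^ 2 * H1 z * P z * (b1 z)⁻¹) + (-105/8 : ℝ) * (a0 z * b2 z ^ 3 * H0 z * P z * (b1 z)⁻¹ ^ 3) + (-9/2 : ℝ) * (a0 z * b1 z * b3 z * H1 z * P z * (b1 z)⁻¹) + (3 : ℝ) * (a0 z * b1 z * b2 z * H2 z * P z) + (45/4 : ℝ) * (a0 z * b1 z * b2 z ^ 2 * H1 z * P z * (b1 z)⁻¹ ^ 2) + (-9/2 : ℝ) * (a0 z * b1 z ^ 2 * b2 z * H2 z * P z * (b1 z)⁻¹) + a0 z * b1 z ^ 3 * H3 z * P z + (-1/2 : ℝ) * (a0 z * a3 z * H0 z * P z * (a0 z)⁻¹) + (9/4 : ℝ) * (a0 z * a2 z * b2 z * H0 z * P z * (a0 z)⁻¹ * (b1 z)⁻¹) + (-3/2 : ℝ) * (a0 z * a2 z * b1 z * H1 z * P z * (a0 z)⁻¹) + (9/4 : ℝ) * (a0 z * a1 z * b3 z * H0 z * P z * (a0 z)⁻¹ * (b1 z)⁻¹) + (-3/2 : ℝ) * (a0 z * a1 z * b2 z * H1 z * P z * (a0 z)⁻¹) + (-45/8 : ℝ)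 * (a0 z * a1 z * b2 z ^ 2 * H0 z * P z * (a0 z)⁻¹ * (b1 z)⁻¹ ^ 2) + (9/2 : ℝ) * (a0 z * a1 z * b1 z * b2 z * H1 z * P z * (a0 z)⁻¹ * (b1 z)⁻¹) + (-3/2 : ℝ) * (a0 z * a1 z * b1 z ^ 2 * H2 z * P z * (a0 z)⁻¹) + (9/4 : ℝ) * (a0 z * a1 z * a2 z * H0 z * P z * (a0 z)⁻¹ ^ 2) + (-27/8 : ℝ) * (a0 z * a1 z ^ 2 * b2 z * H0 z * P z * (a0 z)⁻¹ ^ 2 * (b1 z)⁻¹) + (9/4 : ℝ) * (a0 z * a1 z ^ 2 * b1 z * H1 z * P z * (a0 z)⁻¹ ^ 2) + (-15/8 : ℝ) * (a0 z * a1 z ^ 3 * H0 z * P z * (a0 z)⁻¹ ^ 3)) ((-3/2 : ℝ) * (a2 y * b3 y * H0 y * P y * (b1 y)⁻¹) + a2 y * b2 y * H1 y * P y + (15/4 : ℝ) * (a2 y * b2 y ^ 2 * H0 y * P y * (b1 y)⁻¹ ^ 2) + (-3 : ℝ) * (a2 y * b1 y * b2 y * H1 y * P y * (b1 y)⁻¹)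 + a2 y * b1 y ^ 2 * H2 y * P y + (-1/2 : ℝ) * (a2 y ^ 2 * H0 y * P y * (a0 y)⁻¹) + (-3 : ℝ) * (a1 y * b4 y * H0 y * P y * (b1 y)⁻¹) + (2 : ℝ) * (a1 y * b3 y * H1 y * P y) + (45/2 : ℝ) * (a1 y * b2 y * b3 y * H0 y * P y * (b1 y)⁻¹ ^ 2) + (-9 : ℝ) * (a1 y * b2 y ^ 2 * H1 y * P y * (b1 y)⁻¹) + (-105/4 : ℝ) * (a1 y * b2 y ^ 3 * H0 y * P y * (b1 y)⁻¹ ^ 3) + (-9 : ℝ) * (a1 y * b1 y * b3 y * H1 y * P y * (b1 y)⁻¹) + (6 : ℝ) * (a1 y * b1 y * b2 y * H2 y * P y) + (45/2 : ℝ) * (a1 y * b1 y * b2 y ^ 2 * H1 y * P y * (b1 y)⁻¹ ^ 2) + (-9 : ℝ) * (a1 y * b1 y ^ 2 * b2 y * H2 y * P y * (b1 y)⁻¹) + (2 : ℝ) * (a1 y * b1 y ^ 3 * H3 y * P y) + (-1 : ℝ) * (a1 y * a3 y * H0 y * P y * (a0 y)⁻¹) + (6 : ℝ) * (a1 y * a2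 y * b2 y * H0 y * P y * (a0 y)⁻¹ * (b1 y)⁻¹) + (-4 : ℝ) * (a1 y * a2 y * b1 y * H1 y * P y * (a0 y)⁻¹) + (9/2 : ℝ) * (a1 y ^ 2 * b3 y * H0 y * P y * (a0 y)⁻¹ * (b1 y)⁻¹) + (-3 : ℝ) * (a1 y ^ 2 * b2 y * H1 y * P y * (a0 y)⁻¹) + (-45/4 : ℝ) * (a1 y ^ 2 * b2 y ^ 2 * H0 y * P y * (a0 y)⁻¹ * (b1 y)⁻¹ ^ 2) + (9 : ℝ) * (a1 y ^ 2 * b1 y * b2 y * H1 y * P y * (a0 y)⁻¹ * (b1 y)⁻¹) + (-3 : ℝ) * (a1 y ^ 2 * b1 y ^ 2 * H2 y * P y * (a0 y)⁻¹) + (21/4 : ℝ) * (a1 y ^ 2 * a2 y * H0 y * P y * (a0 y)⁻¹ ^ 2) + (-27/4 : ℝ) * (a1 y ^ 3 * b2 y * H0 y * P y * (a0 y)⁻¹ ^ 2 * (b1 y)⁻¹) + (9/2 : ℝ) * (a1 y ^ 3 * b1 y * H1 y * P y * (a0 y)⁻¹ ^ 2) + (-15/4 : ℝ) * (a1 y ^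 4 * H0 y * P y * (a0 y)⁻¹ ^ 3) + (-3/2 : ℝ) * (a0 y * b5 y * H0 y * P y * (b1 y)⁻¹) + a0 y * b4 y * H1 y * P y + (45/4 : ℝ) * (a0 y * b3 y ^ 2 * H0 y * P y * (b1 y)⁻¹ ^ 2) + (15 : ℝ) * (a0 y * b2 y * b4 y * H0 y * P y * (b1 y)⁻¹ ^ 2) + (-15 : ℝ) * (a0 y * b2 y * b3 y * H1 y * P y * (b1 y)⁻¹) + (3 : ℝ) * (a0 y * b2 y ^ 2 * H2 y * P y) + (-315/4 : ℝ) * (a0 y * b2 y ^ 2 * b3 y * H0 y * P y * (b1 y)⁻¹ ^ 3) + (45/2 : ℝ) * (a0 y * b2 y ^ 3 * H1 y * P y * (b1 y)⁻¹ ^ 2) + (945/16 : ℝ) * (a0 y * b2 y ^ 4 * H0 y * P y * (b1 y)⁻¹ ^ 4) + (-6 : ℝ) * (a0 y * b1 y * b4 y * H1 y * P y * (b1 y)⁻¹) + (4 : ℝ) * (a0 y * b1 y * b3 y * H2 y * P y) + (45 : ℝ) * (a0 y * b1 y * b2 y * b3 y * H1 y * P y * (b1 y)⁻¹ ^ 2)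 + (-18 : ℝ) * (a0 y * b1 y * b2 y ^ 2 * H2 y * P y * (b1 y)⁻¹) + (-105/2 : ℝ) * (a0 y * b1 y * b2 y ^ 3 * H1 y * P y * (b1 y)⁻¹ ^ 3) + (-9 : ℝ) * (a0 y * b1 y ^ 2 * b3 y * H2 y * P y * (b1 y)⁻¹) + (6 : ℝ) * (a0 y * b1 y ^ 2 * b2 y * H3 y * P y) + (45/2 : ℝ) * (a0 y * b1 y ^ 2 * b2 y ^ 2 * H2 y * P y * (b1 y)⁻¹ ^ 2) + (-6 : ℝ) * (a0 y * b1 y ^ 3 * b2 y * H3 y * P y * (b1 y)⁻¹) + a0 y * b1 y ^ 4 * H4 y * P y + (-1/2 : ℝ) * (a0 y * a4 y * H0 y * P y * (a0 y)⁻¹) + (3 : ℝ) * (a0 y * a3 y * b2 y * H0 y * P y * (a0 y)⁻¹ * (b1 y)⁻¹) + (-2 : ℝ) * (a0 y * a3 y * b1 y * H1 y * P y * (a0 y)⁻¹) + (9/2 : ℝ) * (a0 y * a2 y * b3 y * H0 y * P y * (a0 y)⁻¹ * (b1 y)⁻¹) + (-3 : ℝ) * (a0 y * a2 y * b2 y *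 H1 y * P y * (a0 y)⁻¹) + (-45/4 : ℝ) * (a0 y * a2 y * b2 y ^ 2 * H0 y * P y * (a0 y)⁻¹ * (b1 y)⁻¹ ^ 2) + (9 : ℝ) * (a0 y * a2 y * b1 y * b2 y * H1 y * P y * (a0 y)⁻¹ * (b1 y)⁻¹) + (-3 : ℝ) * (a0 y * a2 y * b1 y ^ 2 * H2 y * P y * (a0 y)⁻¹) + (9/4 : ℝ) * (a0 y * a2 y ^ 2 * H0 y * P y * (a0 y)⁻¹ ^ 2) + (3 : ℝ) * (a0 y * a1 y * b4 y * H0 y * P y * (a0 y)⁻¹ * (b1 y)⁻¹) + (-2 : ℝ) * (a0 y * a1 y * b3 y * H1 y * P y * (a0 y)⁻¹) + (-45/2 : ℝ) * (a0 y * a1 y * b2 y * b3 y * H0 y * P y * (a0 y)⁻¹ * (b1 y)⁻¹ ^ 2) + (9 : ℝ) * (a0 y * a1 y * b2 y ^ 2 * H1 y * P y * (a0 y)⁻¹ * (b1 y)⁻¹) + (105/4 : ℝ) * (a0 y * a1 y * b2 y ^ 3 * H0 y * P y * (a0 y)⁻¹ * (b1 y)⁻¹ ^ 3) + (9 : ℝ)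 * (a0 y * a1 y * b1 y * b3 y * H1 y * P y * (a0 y)⁻¹ * (b1 y)⁻¹) + (-6 : ℝ) * (a0 y * a1 y * b1 y * b2 y * H2 y * P y * (a0 y)⁻¹) + (-45/2 : ℝ) * (a0 y * a1 y * b1 y * b2 y ^ 2 * H1 y * P y * (a0 y)⁻¹ * (b1 y)⁻¹ ^ 2) + (9 : ℝ) * (a0 y * a1 y * b1 y ^ 2 * b2 y * H2 y * P y * (a0 y)⁻¹ * (b1 y)⁻¹) + (-2 : ℝ) * (a0 y * a1 y * b1 y ^ 3 * H3 y * P y * (a0 y)⁻¹) + (3 : ℝ) * (a0 y * a1 y * a3 y * H0 y * P y * (a0 y)⁻¹ ^ 2) + (-27/2 : ℝ) * (a0 y * a1 y * a2 y * b2 y * H0 y * P y * (a0 y)⁻¹ ^ 2 * (b1 y)⁻¹) + (9 : ℝ) * (a0 y * a1 y * a2 y * b1 y * H1 y * P y * (a0 y)⁻¹ ^ 2) + (-27/4 : ℝ) * (a0 y * a1 y ^ 2 * b3 y * H0 y * P y * (a0 y)⁻¹ ^ 2 * (b1 y)⁻¹) + (9/2 : ℝ) * (a0 y * a1 y ^ 2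 * b2 y * H1 y * P y * (a0 y)⁻¹ ^ 2) + (135/8 : ℝ) * (a0 y * a1 y ^ 2 * b2 y ^ 2 * H0 y * P y * (a0 y)⁻¹ ^ 2 * (b1 y)⁻¹ ^ 2) + (-27/2 : ℝ) * (a0 y * a1 y ^ 2 * b1 y * b2 y * H1 y * P y * (a0 y)⁻¹ ^ 2 * (b1 y)⁻¹) + (9/2 : ℝ) * (a0 y * a1 y ^ 2 * b1 y ^ 2 * H2 y * P y * (a0 y)⁻¹ ^ 2) + (-45/4 : ℝ) * (a0 y * a1 y ^ 2 * a2 y * H0 y * P y * (a0 y)⁻¹ ^ 3) + (45/4 : ℝ) * (a0 y * a1 y ^ 3 * b2 y * H0 y * P y * (a0 y)⁻¹ ^ 3 * (b1 y)⁻¹) + (-15/2 : ℝ) * (a0 y * a1 y ^ 3 * b1 y * H1 y * P y * (a0 y)⁻¹ ^ 3) + (105/16 : ℝ) * (a0 y * a1 y ^ 4 * H0 y * P y * (a0 y)⁻¹ ^ 4)) y := by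
    intro y hy
    exact (((((((((((((((((((((((((((((((((((((ha1 y hy).mul (hb3 y hy)).mul (hH0 y hy)).mul (hP y hy)).mul (hiB y hy)).const_mul (-3/2 : ℝ)).add ((((ha1 y hy).mul (hb2 y hy)).mul (hH1 y hy)).mul (hP y hy))).add ((((((ha1 y hy).mul ((hb2 y hy).pow 2)).mul (hH0 y hy)).mul (hP y hy)).mul ((hiB y hy).pow 2)).const_mul (15/4 : ℝ))).add (((((((ha1 y hy).mul (hb1 y hy)).mul (hb2 y hy)).mul (hH1 y hy)).mul (hP y hy)).mul (hiB y hy)).const_mul (-3 : ℝ))).add ((((ha1 y hy).mul ((hb1 y hy).pow 2)).mul (hH2 y hy)).mul (hP y hy))).add ((((((ha1 y hy).mul (ha2 y hy)).mul (hH0 y hy)).mul (hP y hy)).mul (hiA y hy)).const_mul (-1/2 : ℝ))).add ((((((((ha1 y hy).pow 2).mul (hb2 y hy)).mul (hH0 y hy)).mul (hP y hy)).mul (hiA y hy)).mul (hiB y hy)).const_mul (3/2 : ℝ))).add (((((((ha1 y hy).pow 2).mul (hb1 y hy)).mul (hH1 y hy)).mul (hP y hy)).mul (hiA y hy)).const_mul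 (-1 : ℝ))).add ((((((ha1 y hy).pow 3).mul (hH0 y hy)).mul (hP y hy)).mul ((hiA y hy).pow 2)).const_mul (3/4 : ℝ))).add ((((((ha0 y hy).mul (hb4 y hy)).mul (hH0 y hy)).mul (hP y hy)).mul (hiB y hy)).const_mul (-3/2 : ℝ))).add ((((ha0 y hy).mul (hb3 y hy)).mul (hH1 y hy)).mul (hP y hy))).add (((((((ha0 y hy).mul (hb2 y hy)).mul (hb3 y hy)).mul (hH0 y hy)).mul (hP y hy)).mul ((hiB y hy).pow 2)).const_mul (45/4 : ℝ))).add ((((((ha0 y hy).mul ((hb2 y hy).pow 2)).mul (hH1 y hy)).mul (hP y hy)).mul (hiB y hy)).const_mul (-9/2 : ℝ))).add ((((((ha0 y hy).mul ((hb2 y hy).pow 3)).mul (hH0 y hy)).mul (hP y hy)).mul ((hiB y hy).pow 3)).const_mul (-105/8 : ℝ))).add (((((((ha0 y hy).mul (hb1 y hy)).mul (hb3 y hy)).mul (hH1 y hy)).mul (hP y hy)).mul (hiB y hy)).const_mul (-9/2 : ℝ))).add ((((((ha0 y hy).mul (hb1 y hy)).mul (hb2 y hy)).mul (hH2 y hy)).mul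 (hP y hy)).const_mul (3 : ℝ))).add (((((((ha0 y hy).mul (hb1 y hy)).mul ((hb2 y hy).pow 2)).mul (hH1 y hy)).mul (hP y hy)).mul ((hiB y hy).pow 2)).const_mul (45/4 : ℝ))).add (((((((ha0 y hy).mul ((hb1 y hy).pow 2)).mul (hb2 y hy)).mul (hH2 y hy)).mul (hP y hy)).mul (hiB y hy)).const_mul (-9/2 : ℝ))).add ((((ha0 y hy).mul ((hb1 y hy).pow 3)).mul (hH3 y hy)).mul (hP y hy))).add ((((((ha0 y hy).mul (ha3 y hy)).mul (hH0 y hy)).mul (hP y hy)).mul (hiA y hy)).const_mul (-1/2 : ℝ))).add ((((((((ha0 y hy).mul (ha2 y hy)).mul (hb2 y hy)).mul (hH0 y hy)).mul (hP y hy)).mul (hiA y hy)).mul (hiB y hy)).const_mul (9/4 : ℝ))).add (((((((ha0 y hy).mul (ha2 y hy)).mul (hb1 y hy)).mul (hH1 y hy)).mul (hP y hy)).mul (hiA y hy)).const_mul (-3/2 : ℝ))).add ((((((((ha0 y hy).mul (ha1 y hy)).mul (hb3 y hy)).mul (hH0 y hy)).mul (hP y hy)).mul (hiA y hy)).mul (hiB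 y hy)).const_mul (9/4 : ℝ))).add (((((((ha0 y hy).mul (ha1 y hy)).mul (hb2 y hy)).mul (hH1 y hy)).mul (hP y hy)).mul (hiA y hy)).const_mul (-3/2 : ℝ))).add ((((((((ha0 y hy).mul (ha1 y hy)).mul ((hb2 y hy).pow 2)).mul (hH0 y hy)).mul (hP y hy)).mul (hiA y hy)).mul ((hiB y hy).pow 2)).const_mul (-45/8 : ℝ))).add (((((((((ha0 y hy).mul (ha1 y hy)).mul (hb1 y hy)).mul (hb2 y hy)).mul (hH1 y hy)).mul (hP y hy)).mul (hiA y hy)).mul (hiB y hy)).const_mul (9/2 : ℝ))).add (((((((ha0 y hy).mul (ha1 y hy)).mul ((hb1 y hy).pow 2)).mul (hH2 y hy)).mul (hP y hy)).mul (hiA y hy)).const_mul (-3/2 : ℝ))).add (((((((ha0 y hy).mul (ha1 y hy)).mul (ha2 y hy)).mul (hH0 y hy)).mul (hP y hy)).mul ((hiA y hy).pow 2)).const_mul (9/4 : ℝ))).add ((((((((ha0 y hy).mul ((ha1 y hy).pow 2)).mul (hb2 y hy)).mul (hH0 y hy)).mul (hP y hy)).mul ((hiA y hy).pow 2)).mul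 (hiB y hy)).const_mul (-27/8 : ℝ))).add (((((((ha0 y hy).mul ((ha1 y hy).pow 2)).mul (hb1 y hy)).mul (hH1 y hy)).mul (hP y hy)).mul ((hiA y hy).pow 2)).const_mul (9/4 : ℝ))).add ((((((ha0 y hy).mul ((ha1 y hy).pow 3)).mul (hH0 y hy)).mul (hP y hy)).mul ((hiA y hy).pow 3)).const_mul (-15/8 : ℝ)))).congr_deriv (by push_cast [Pi.mul_apply, Pi.pow_apply]; ring)
  have hdR1 : ∀ y ∈ I, HasDerivAt (fun z => (3/2 : ℝ) * (b2 z ^ 2 * (b1 z)⁻¹) + (-2/5 : ℝ) * (a2 z * b1 z * (a0 z)⁻¹) + (3/10 : ℝ) * (a1 z ^ 2 * b1 z * (a0 z)⁻¹ ^ 2)) ((3 : ℝ) * (b2 y * b3 y * (b1 y)⁻¹) + (-3/2 : ℝ) * (b2 y ^ 3 * (b1 y)⁻¹ ^ 2) + (-2/5 : ℝ) * (a3 y * b1 y * (a0 y)⁻¹) + (-2/5 : ℝ) * (a2 y * b2 y * (a0 y)⁻¹) + a1 y * a2 y * b1 y * (a0 y)⁻¹ ^ 2 + (3/10 : ℝ)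 * (a1 y ^ 2 * b2 y * (a0 y)⁻¹ ^ 2) + (-3/5 : ℝ) * (a1 y ^ 3 * b1 y * (a0 y)⁻¹ ^ 3)) y := by
    intro y hy
    exact (((((((hb2 y hy).pow 2).mul (hiB y hy)).const_mul (3/2 : ℝ)).add ((((ha2 y hy).mul (hb1 y hy)).mul (hiA y hy)).const_mul (-2/5 : ℝ))).add (((((ha1 y hy).pow 2).mul (hb1 y hy)).mul ((hiA y hy).pow 2)).const_mul (3/10 : ℝ)))).congr_deriv (by push_cast [Pi.mul_apply, Pi.pow_apply]; ring)
  have hdDR1 : ∀ y ∈ I, HasDerivAt (fun z => (3 : ℝ) * (b2 z * b3 z * (b1 z)⁻¹) + (-3/2 : ℝ) * (b2 z ^ 3 * (b1 z)⁻¹ ^ 2) + (-2/5 : ℝ) * (a3 z * b1 z * (a0 z)⁻¹) + (-2/5 : ℝ) * (a2 z * b2 z * (a0 z)⁻¹) + a1 z * a2 z * b1 z * (a0 z)⁻¹ ^ 2 + (3/10 : ℝ) * (a1 z ^ 2 * b2 z * (a0 z)⁻¹ ^ 2) + (-3/5 : ℝ) * (a1 z ^ 3 * b1 z * (a0 z)⁻¹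 ^ 3)) ((3 : ℝ) * (b3 y ^ 2 * (b1 y)⁻¹) + (3 : ℝ) * (b2 y * b4 y * (b1 y)⁻¹) + (-15/2 : ℝ) * (b2 y ^ 2 * b3 y * (b1 y)⁻¹ ^ 2) + (3 : ℝ) * (b2 y ^ 4 * (b1 y)⁻¹ ^ 3) + (-2/5 : ℝ) * (a4 y * b1 y * (a0 y)⁻¹) + (-4/5 : ℝ) * (a3 y * b2 y * (a0 y)⁻¹) + (-2/5 : ℝ) * (a2 y * b3 y * (a0 y)⁻¹) + a2 y ^ 2 * b1 y * (a0 y)⁻¹ ^ 2 + (7/5 : ℝ) * (a1 y * a3 y * b1 y * (a0 y)⁻¹ ^ 2) + (2 : ℝ) * (a1 y * a2 y * b2 y * (a0 y)⁻¹ ^ 2) + (3/10 : ℝ) * (a1 y ^ 2 * b3 y * (a0 y)⁻¹ ^ 2) + (-19/5 : ℝ) * (a1 y ^ 2 * a2 y * b1 y * (a0 y)⁻¹ ^ 3) + (-6/5 : ℝ) * (a1 y ^ 3 * b2 y * (a0 y)⁻¹ ^ 3) + (9/5 : ℝ) * (a1 y ^ 4 * b1 y * (a0 y)⁻¹ ^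 4)) y := by
    intro y hy
    exact (((((((((((hb2 y hy).mul (hb3 y hy)).mul (hiB y hy)).const_mul (3 : ℝ)).add ((((hb2 y hy).pow 3).mul ((hiB y hy).pow 2)).const_mul (-3/2 : ℝ))).add ((((ha3 y hy).mul (hb1 y hy)).mul (hiA y hy)).const_mul (-2/5 : ℝ))).add ((((ha2 y hy).mul (hb2 y hy)).mul (hiA y hy)).const_mul (-2/5 : ℝ))).add ((((ha1 y hy).mul (ha2 y hy)).mul (hb1 y hy)).mul ((hiA y hy).pow 2))).add (((((ha1 y hy).pow 2).mul (hb2 y hy)).mul ((hiA y hy).pow 2)).const_mul (3/10 : ℝ))).add (((((ha1 y hy).pow 3).mul (hb1 y hy)).mul ((hiA y hy).pow 3)).const_mul (-3/5 : ℝ)))).congr_deriv (by push_cast [Pi.mul_apply, Pi.pow_apply]; ring)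
  have k2 : ∀ y ∈ I, deriv (deriv (fun z => H0 z * P z)) y = (-3/2 : ℝ) * (b3 y * H0 y * P y * (b1 y)⁻¹) + b2 y * H1 y * P y + (15/4 : ℝ) * (b2 y ^ 2 * H0 y * P y * (b1 y)⁻¹ ^ 2) + (-3 : ℝ) * (b1 y * b2 y * H1 y * P y * (b1 y)⁻¹) + b1 y ^ 2 * H2 y * P y + (-1/2 : ℝ) * (a2 y * H0 y * P y * (a0 y)⁻¹) + (3/2 : ℝ) * (a1 y * b2 y * H0 y * P y * (a0 y)⁻¹ * (b1 y)⁻¹) + (-1 : ℝ) * (a1 y * b1 y * H1 y * P y * (a0 y)⁻¹) + (3/4 : ℝ) * (a1 y ^ 2 * H0 y * P y * (a0 y)⁻¹ ^ 2) := by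
    intro y hy
    have he : deriv (fun z => H0 z * P z) =ᶠ[nhds y] (fun z => (-3/2 : ℝ) * (b2 z * H0 z * P z * (b1 z)⁻¹) + b1 z * H1 z * P z + (-1/2 : ℝ) * (a1 z * H0 z * P z * (a0 z)⁻¹)) :=
      Filter.eventuallyEq_of_mem (hIopen.mem_nhds hy) (fun z hz => (hd1 z hz).deriv)
    rw [he.deriv_eq]
    exact (hd2 y hy).deriv
  have k3 : ∀ y ∈ I, deriv (fun y => a0 y * deriv (deriv (fun z => H0 z * P z)) y) y = (-3/2 : ℝ) * (a1 y * b3 y * H0 y * P y * (b1 y)⁻¹) + a1 y * b2 y * H1 y * P y + (15/4 : ℝ) * (a1 y * b2 y ^ 2 * H0 y * P y * (b1 y)⁻¹ ^ 2) + (-3 : ℝ) * (a1 y * b1 y * b2 y * H1 y * P y * (b1 y)⁻¹) + a1 y * b1 y ^ 2 * H2 y * P y + (-1/2 : ℝ) * (a1 y * a2 y * H0 y * P y * (a0 y)⁻¹) + (3/2 : ℝ) * (a1 y ^ 2 * b2 y * H0 y * P y * (a0 y)⁻¹ * (b1 y)⁻¹) + (-1 : ℝ) * (a1 y ^ 2 *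 b1 y * H1 y * P y * (a0 y)⁻¹) + (3/4 : ℝ) * (a1 y ^ 3 * H0 y * P y * (a0 y)⁻¹ ^ 2) + (-3/2 : ℝ) * (a0 y * b4 y * H0 y * P y * (b1 y)⁻¹) + a0 y * b3 y * H1 y * P y + (45/4 : ℝ) * (a0 y * b2 y * b3 y * H0 y * P y * (b1 y)⁻¹ ^ 2) + (-9/2 : ℝ) * (a0 y * b2 y ^ 2 * H1 y * P y * (b1 y)⁻¹) + (-105/8 : ℝ) * (a0 y * b2 y ^ 3 * H0 y * P y * (b1 y)⁻¹ ^ 3) + (-9/2 : ℝ) * (a0 y * b1 y * b3 y * H1 y * P y * (b1 y)⁻¹) + (3 : ℝ) * (a0 y * b1 y * b2 y * H2 y * P y) + (45/4 : ℝ) * (a0 y * b1 y * b2 y ^ 2 * H1 y * P y * (b1 y)⁻¹ ^ 2) + (-9/2 : ℝ) * (a0 y * b1 y ^ 2 * b2 y * H2 y * P y * (b1 y)⁻¹) + a0 y * b1 y ^ 3 * H3 y * P y + (-1/2 : ℝ) * (a0 y * a3 y * H0 y * P y * (a0 y)⁻¹) + (9/4 : ℝ) * (a0 y * a2 y * b2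 y * H0 y * P y * (a0 y)⁻¹ * (b1 y)⁻¹) + (-3/2 : ℝ) * (a0 y * a2 y * b1 y * H1 y * P y * (a0 y)⁻¹) + (9/4 : ℝ) * (a0 y * a1 y * b3 y * H0 y * P y * (a0 y)⁻¹ * (b1 y)⁻¹) + (-3/2 : ℝ) * (a0 y * a1 y * b2 y * H1 y * P y * (a0 y)⁻¹) + (-45/8 : ℝ) * (a0 y * a1 y * b2 y ^ 2 * H0 y * P y * (a0 y)⁻¹ * (b1 y)⁻¹ ^ 2) + (9/2 : ℝ) * (a0 y * a1 y * b1 y * b2 y * H1 y * P y * (a0 y)⁻¹ * (b1 y)⁻¹) + (-3/2 : ℝ) * (a0 y * a1 y * b1 y ^ 2 * H2 y * P y * (a0 y)⁻¹) + (9/4 : ℝ) * (a0 y * a1 y * a2 y * H0 y * P y * (a0 y)⁻¹ ^ 2) + (-27/8 : ℝ) * (a0 y * a1 y ^ 2 * b2 y * H0 y * P y * (a0 y)⁻¹ ^ 2 * (b1 y)⁻¹) + (9/4 : ℝ) * (a0 y * a1 y ^ 2 * b1 y * H1 y * P y * (a0 y)⁻¹ ^ 2) + (-15/8 : ℝ)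 * (a0 y * a1 y ^ 3 * H0 y * P y * (a0 y)⁻¹ ^ 3) := by
    intro y hy
    have he : (fun y => a0 y * deriv (deriv (fun z => H0 z * P z)) y) =ᶠ[nhds y]
        (fun z => a0 z * ((-3/2 : ℝ) * (b3 z * H0 z * P z * (b1 z)⁻¹) + b2 z * H1 z * P z + (15/4 : ℝ) * (b2 z ^ 2 * H0 z * P z * (b1 z)⁻¹ ^ 2) + (-3 : ℝ) * (b1 z * b2 z * H1 z * P z * (b1 z)⁻¹) + b1 z ^ 2 * H2 z * P z + (-1/2 : ℝ) * (a2 z * H0 z * P z * (a0 z)⁻¹) + (3/2 : ℝ) * (a1 z * b2 z * H0 z * P z * (a0 z)⁻¹ * (b1 z)⁻¹) + (-1 : ℝ) * (a1 z * b1 z * H1 z * P z * (a0 z)⁻¹) + (3/4 : ℝ) * (a1 z ^ 2 * H0 z * P z * (a0 z)⁻¹ ^ 2))) := by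
      filter_upwards [hIopen.mem_nhds hy] with z hz
      rw [k2 z hz]
    rw [he.deriv_eq]
    exact (hd3 y hy).deriv
  have k4 : deriv (deriv (fun y => a0 y * deriv (deriv (fun z => H0 z * P z)) y)) x = (-3/2 : ℝ) * (a2 x * b3 x * H0 x * P x * (b1 x)⁻¹) + a2 x * b2 x * H1 x * P x + (15/4 : ℝ) * (a2 x * b2 x ^ 2 * H0 x * P x * (b1 x)⁻¹ ^ 2) + (-3 : ℝ) * (a2 x * b1 x * b2 x * H1 x * P x * (b1 x)⁻¹) + a2 x * b1 x ^ 2 * H2 x * P x + (-1/2 : ℝ) * (a2 x ^ 2 * H0 x * P x * (a0 x)⁻¹) + (-3 : ℝ) * (a1 x * b4 x * H0 x * P x * (b1 x)⁻¹) + (2 : ℝ) * (a1 x * b3 x * H1 x * P x) + (45/2 : ℝ) * (a1 x * b2 x * b3 x * H0 x * P x * (b1 x)⁻¹ ^ 2) + (-9 : ℝ) * (a1 x * b2 x ^ 2 * H1 x * P x * (b1 x)⁻¹) + (-105/4 : ℝ) * (a1 x * b2 x ^ 3 * H0 x * P x * (b1 x)⁻¹ ^ 3) + (-9 : ℝ)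 * (a1 x * b1 x * b3 x * H1 x * P x * (b1 x)⁻¹) + (6 : ℝ) * (a1 x * b1 x * b2 x * H2 x * P x) + (45/2 : ℝ) * (a1 x * b1 x * b2 x ^ 2 * H1 x * P x * (b1 x)⁻¹ ^ 2) + (-9 : ℝ) * (a1 x * b1 x ^ 2 * b2 x * H2 x * P x * (b1 x)⁻¹) + (2 : ℝ) * (a1 x * b1 x ^ 3 * H3 x * P x) + (-1 : ℝ) * (a1 x * a3 x * H0 x * P x * (a0 x)⁻¹) + (6 : ℝ) * (a1 x * a2 x * b2 x * H0 x * P x * (a0 x)⁻¹ * (b1 x)⁻¹) + (-4 : ℝ) * (a1 x * a2 x * b1 x * H1 x * P x * (a0 x)⁻¹) + (9/2 : ℝ) * (a1 x ^ 2 * b3 x * H0 x * P x * (a0 x)⁻¹ * (b1 x)⁻¹) + (-3 : ℝ) * (a1 x ^ 2 * b2 x * H1 x * P x * (a0 x)⁻¹) + (-45/4 : ℝ) * (a1 x ^ 2 * b2 x ^ 2 * H0 x * P x * (a0 x)⁻¹ * (b1 x)⁻¹ ^ 2) + (9 : ℝ) * (a1 x ^ 2 * b1 x * b2 x * H1 x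 * P x * (a0 x)⁻¹ * (b1 x)⁻¹) + (-3 : ℝ) * (a1 x ^ 2 * b1 x ^ 2 * H2 x * P x * (a0 x)⁻¹) + (21/4 : ℝ) * (a1 x ^ 2 * a2 x * H0 x * P x * (a0 x)⁻¹ ^ 2) + (-27/4 : ℝ) * (a1 x ^ 3 * b2 x * H0 x * P x * (a0 x)⁻¹ ^ 2 * (b1 x)⁻¹) + (9/2 : ℝ) * (a1 x ^ 3 * b1 x * H1 x * P x * (a0 x)⁻¹ ^ 2) + (-15/4 : ℝ) * (a1 x ^ 4 * H0 x * P x * (a0 x)⁻¹ ^ 3) + (-3/2 : ℝ) * (a0 x * b5 x * H0 x * P x * (b1 x)⁻¹) + a0 x * b4 x * H1 x * P x + (45/4 : ℝ) * (a0 x * b3 x ^ 2 * H0 x * P x * (b1 x)⁻¹ ^ 2) + (15 : ℝ) * (a0 x * b2 x * b4 x * H0 x * P x * (b1 x)⁻¹ ^ 2) + (-15 : ℝ) * (a0 x * b2 x * b3 x * H1 x * P x * (b1 x)⁻¹) + (3 : ℝ) * (a0 x * b2 x ^ 2 * H2 x * P x) + (-315/4 : ℝ) * (a0 x * b2 x ^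 2 * b3 x * H0 x * P x * (b1 x)⁻¹ ^ 3) + (45/2 : ℝ) * (a0 x * b2 x ^ 3 * H1 x * P x * (b1 x)⁻¹ ^ 2) + (945/16 : ℝ) * (a0 x * b2 x ^ 4 * H0 x * P x * (b1 x)⁻¹ ^ 4) + (-6 : ℝ) * (a0 x * b1 x * b4 x * H1 x * P x * (b1 x)⁻¹) + (4 : ℝ) * (a0 x * b1 x * b3 x * H2 x * P x) + (45 : ℝ) * (a0 x * b1 x * b2 x * b3 x * H1 x * P x * (b1 x)⁻¹ ^ 2) + (-18 : ℝ) * (a0 x * b1 x * b2 x ^ 2 * H2 x * P x * (b1 x)⁻¹) + (-105/2 : ℝ) * (a0 x * b1 x * b2 x ^ 3 * H1 x * P x * (b1 x)⁻¹ ^ 3) + (-9 : ℝ) * (a0 x * b1 x ^ 2 * b3 x * H2 x * P x * (b1 x)⁻¹) + (6 : ℝ) * (a0 x * b1 x ^ 2 * b2 x * H3 x * P x) + (45/2 : ℝ) * (a0 x * b1 x ^ 2 * b2 x ^ 2 * H2 x * P x * (b1 x)⁻¹ ^ 2) + (-6 : ℝ) * (a0 x * b1 x ^ 3 * b2 x *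 H3 x * P x * (b1 x)⁻¹) + a0 x * b1 x ^ 4 * H4 x * P x + (-1/2 : ℝ) * (a0 x * a4 x * H0 x * P x * (a0 x)⁻¹) + (3 : ℝ) * (a0 x * a3 x * b2 x * H0 x * P x * (a0 x)⁻¹ * (b1 x)⁻¹) + (-2 : ℝ) * (a0 x * a3 x * b1 x * H1 x * P x * (a0 x)⁻¹) + (9/2 : ℝ) * (a0 x * a2 x * b3 x * H0 x * P x * (a0 x)⁻¹ * (b1 x)⁻¹) + (-3 : ℝ) * (a0 x * a2 x * b2 x * H1 x * P x * (a0 x)⁻¹) + (-45/4 : ℝ) * (a0 x * a2 x * b2 x ^ 2 * H0 x * P x * (a0 x)⁻¹ * (b1 x)⁻¹ ^ 2) + (9 : ℝ) * (a0 x * a2 x * b1 x * b2 x * H1 x * P x * (a0 x)⁻¹ * (b1 x)⁻¹) + (-3 : ℝ) * (a0 x * a2 x * b1 x ^ 2 * H2 x * P x * (a0 x)⁻¹) + (9/4 : ℝ) * (a0 x * a2 x ^ 2 * H0 x * P x * (a0 x)⁻¹ ^ 2) + (3 : ℝ) * (a0 x * a1 x * b4 x * H0 x * P x * (a0 x)⁻¹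 * (b1 x)⁻¹) + (-2 : ℝ) * (a0 x * a1 x * b3 x * H1 x * P x * (a0 x)⁻¹) + (-45/2 : ℝ) * (a0 x * a1 x * b2 x * b3 x * H0 x * P x * (a0 x)⁻¹ * (b1 x)⁻¹ ^ 2) + (9 : ℝ) * (a0 x * a1 x * b2 x ^ 2 * H1 x * P x * (a0 x)⁻¹ * (b1 x)⁻¹) + (105/4 : ℝ) * (a0 x * a1 x * b2 x ^ 3 * H0 x * P x * (a0 x)⁻¹ * (b1 x)⁻¹ ^ 3) + (9 : ℝ) * (a0 x * a1 x * b1 x * b3 x * H1 x * P x * (a0 x)⁻¹ * (b1 x)⁻¹) + (-6 : ℝ) * (a0 x * a1 x * b1 x * b2 x * H2 x * P x * (a0 x)⁻¹) + (-45/2 : ℝ) * (a0 x * a1 x * b1 x * b2 x ^ 2 * H1 x * P x * (a0 x)⁻¹ * (b1 x)⁻¹ ^ 2) + (9 : ℝ) * (a0 x * a1 x * b1 x ^ 2 * b2 x * H2 x * P x * (a0 x)⁻¹ * (b1 x)⁻¹) + (-2 : ℝ) * (a0 x * a1 x * b1 x ^ 3 * H3 x * P x * (a0 x)⁻¹) +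 (3 : ℝ) * (a0 x * a1 x * a3 x * H0 x * P x * (a0 x)⁻¹ ^ 2) + (-27/2 : ℝ) * (a0 x * a1 x * a2 x * b2 x * H0 x * P x * (a0 x)⁻¹ ^ 2 * (b1 x)⁻¹) + (9 : ℝ) * (a0 x * a1 x * a2 x * b1 x * H1 x * P x * (a0 x)⁻¹ ^ 2) + (-27/4 : ℝ) * (a0 x * a1 x ^ 2 * b3 x * H0 x * P x * (a0 x)⁻¹ ^ 2 * (b1 x)⁻¹) + (9/2 : ℝ) * (a0 x * a1 x ^ 2 * b2 x * H1 x * P x * (a0 x)⁻¹ ^ 2) + (135/8 : ℝ) * (a0 x * a1 x ^ 2 * b2 x ^ 2 * H0 x * P x * (a0 x)⁻¹ ^ 2 * (b1 x)⁻¹ ^ 2) + (-27/2 : ℝ) * (a0 x * a1 x ^ 2 * b1 x * b2 x * H1 x * P x * (a0 x)⁻¹ ^ 2 * (b1 x)⁻¹) + (9/2 : ℝ) * (a0 x * a1 x ^ 2 * b1 x ^ 2 * H2 x * P x * (a0 x)⁻¹ ^ 2) + (-45/4 : ℝ) * (a0 x * a1 x ^ 2 * a2 x * H0 x * P x * (a0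 x)⁻¹ ^ 3) + (45/4 : ℝ) * (a0 x * a1 x ^ 3 * b2 x * H0 x * P x * (a0 x)⁻¹ ^ 3 * (b1 x)⁻¹) + (-15/2 : ℝ) * (a0 x * a1 x ^ 3 * b1 x * H1 x * P x * (a0 x)⁻¹ ^ 3) + (105/16 : ℝ) * (a0 x * a1 x ^ 4 * H0 x * P x * (a0 x)⁻¹ ^ 4) := by
    have he : deriv (fun y => a0 y * deriv (deriv (fun z => H0 z * P z)) y) =ᶠ[nhds x]
        (fun z => (-3/2 : ℝ) * (a1 z * b3 z * H0 z * P z * (b1 z)⁻¹) + a1 z * b2 z * H1 z * P z + (15/4 : ℝ) * (a1 z * b2 z ^ 2 * H0 z * P z * (b1 z)⁻¹ ^ 2) + (-3 : ℝ) * (a1 z * b1 z * b2 z * H1 z * P z * (b1 z)⁻¹) + a1 z * b1 z ^ 2 * H2 z * P z + (-1/2 : ℝ) * (a1 z * a2 z * H0 z * P z * (a0 z)⁻¹) + (3/2 : ℝ) * (a1 z ^ 2 * b2 z * H0 z * P z * (a0 z)⁻¹ * (b1 z)⁻¹) + (-1 : ℝ) * (a1 z ^ 2 * b1 z * H1 z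 * P z * (a0 z)⁻¹) + (3/4 : ℝ) * (a1 z ^ 3 * H0 z * P z * (a0 z)⁻¹ ^ 2) + (-3/2 : ℝ) * (a0 z * b4 z * H0 z * P z * (b1 z)⁻¹) + a0 z * b3 z * H1 z * P z + (45/4 : ℝ) * (a0 z * b2 z * b3 z * H0 z * P z * (b1 z)⁻¹ ^ 2) + (-9/2 : ℝ) * (a0 z * b2 z ^ 2 * H1 z * P z * (b1 z)⁻¹) + (-105/8 : ℝ) * (a0 z * b2 z ^ 3 * H0 z * P z * (b1 z)⁻¹ ^ 3) + (-9/2 : ℝ) * (a0 z * b1 z * b3 z * H1 z * P z * (b1 z)⁻¹) + (3 : ℝ) * (a0 z * b1 z * b2 z * H2 z * P z) + (45/4 : ℝ) * (a0 z * b1 z * b2 z ^ 2 * H1 z * P z * (b1 z)⁻¹ ^ 2) + (-9/2 : ℝ) * (a0 z * b1 z ^ 2 * b2 z * H2 z * P z * (b1 z)⁻¹) + a0 z * b1 z ^ 3 * H3 z * P z + (-1/2 : ℝ) * (a0 z * a3 z * H0 z * P z * (a0 z)⁻¹) + (9/4 : ℝ) * (a0 z * a2 z * b2 z * H0 z * P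 z * (a0 z)⁻¹ * (b1 z)⁻¹) + (-3/2 : ℝ) * (a0 z * a2 z * b1 z * H1 z * P z * (a0 z)⁻¹) + (9/4 : ℝ) * (a0 z * a1 z * b3 z * H0 z * P z * (a0 z)⁻¹ * (b1 z)⁻¹) + (-3/2 : ℝ) * (a0 z * a1 z * b2 z * H1 z * P z * (a0 z)⁻¹) + (-45/8 : ℝ) * (a0 z * a1 z * b2 z ^ 2 * H0 z * P z * (a0 z)⁻¹ * (b1 z)⁻¹ ^ 2) + (9/2 : ℝ) * (a0 z * a1 z * b1 z * b2 z * H1 z * P z * (a0 z)⁻¹ * (b1 z)⁻¹) + (-3/2 : ℝ) * (a0 z * a1 z * b1 z ^ 2 * H2 z * P z * (a0 z)⁻¹) + (9/4 : ℝ) * (a0 z * a1 z * a2 z * H0 z * P z * (a0 z)⁻¹ ^ 2) + (-27/8 : ℝ) * (a0 z * a1 z ^ 2 * b2 z * H0 z * P z * (a0 z)⁻¹ ^ 2 * (b1 z)⁻¹) + (9/4 : ℝ) * (a0 z * a1 z ^ 2 * b1 z * H1 z * P z * (a0 z)⁻¹ ^ 2) + (-15/8 : ℝ) * (a0 z * a1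 z ^ 3 * H0 z * P z * (a0 z)⁻¹ ^ 3)) :=
      Filter.eventuallyEq_of_mem (hIopen.mem_nhds hx) (fun z hz => k3 z hz)
    rw [he.deriv_eq]
    exact (hd4 x hx).deriv
  have m1 : ∀ y ∈ I, b4 y = (3 : ℝ) * (b2 y * b3 y * (b1 y)⁻¹) + (-3/2 : ℝ) * (b2 y ^ 3 * (b1 y)⁻¹ ^ 2) + (-2/5 : ℝ) * (a3 y * b1 y * (a0 y)⁻¹) + (-2/5 : ℝ) * (a2 y * b2 y * (a0 y)⁻¹) + a1 y * a2 y * b1 y * (a0 y)⁻¹ ^ 2 + (3/10 : ℝ) * (a1 y ^ 2 * b2 y * (a0 y)⁻¹ ^ 2) + (-3/5 : ℝ) * (a1 y ^ 3 * b1 y * (a0 y)⁻¹ ^ 3) := by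
    intro y hy
    have he : b3 =ᶠ[nhds y] (fun z => (3/2 : ℝ) * (b2 z ^ 2 * (b1 z)⁻¹) + (-2/5 : ℝ) * (a2 z * b1 z * (a0 z)⁻¹) + (3/10 : ℝ) * (a1 z ^ 2 * b1 z * (a0 z)⁻¹ ^ 2)) :=
      Filter.eventuallyEq_of_mem (hIopen.mem_nhds hy) (fun z hz => heqI z hz)
    rw [← (hb3 y hy).deriv, he.deriv_eq]
    exact (hdR1 y hy).deriv
  have m2 : b5 x = (3 : ℝ) * (b3 x ^ 2 * (b1 x)⁻¹) + (3 : ℝ) * (b2 x * b4 x * (b1 x)⁻¹) + (-15/2 : ℝ) * (b2 x ^ 2 * b3 x * (b1 x)⁻¹ ^ 2) + (3 : ℝ) * (b2 x ^ 4 * (b1 x)⁻¹ ^ 3) + (-2/5 : ℝ) * (a4 x * b1 x * (a0 x)⁻¹) + (-4/5 : ℝ) * (a3 x * b2 x * (a0 x)⁻¹) + (-2/5 : ℝ) * (a2 x * b3 x * (a0 x)⁻¹) + a2 x ^ 2 * b1 x * (a0 x)⁻¹ ^ 2 + (7/5 : ℝ) * (a1 x * a3 x * b1 x * (a0 x)⁻¹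 ^ 2) + (2 : ℝ) * (a1 x * a2 x * b2 x * (a0 x)⁻¹ ^ 2) + (3/10 : ℝ) * (a1 x ^ 2 * b3 x * (a0 x)⁻¹ ^ 2) + (-19/5 : ℝ) * (a1 x ^ 2 * a2 x * b1 x * (a0 x)⁻¹ ^ 3) + (-6/5 : ℝ) * (a1 x ^ 3 * b2 x * (a0 x)⁻¹ ^ 3) + (9/5 : ℝ) * (a1 x ^ 4 * b1 x * (a0 x)⁻¹ ^ 4) := by
    have he : b4 =ᶠ[nhds x] (fun z => (3 : ℝ) * (b2 z * b3 z * (b1 z)⁻¹) + (-3/2 : ℝ) * (b2 z ^ 3 * (b1 z)⁻¹ ^ 2) + (-2/5 : ℝ) * (a3 z * b1 z * (a0 z)⁻¹) + (-2/5 : ℝ) * (a2 z * b2 z * (a0 z)⁻¹) + a1 z * a2 z * b1 z * (a0 z)⁻¹ ^ 2 + (3/10 : ℝ) * (a1 z ^ 2 * b2 z * (a0 z)⁻¹ ^ 2) + (-3/5 : ℝ) * (a1 z ^ 3 * b1 z * (a0 z)⁻¹ ^ 3)) :=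
      Filter.eventuallyEq_of_mem (hIopen.mem_nhds hx) (fun z hz => m1 z hz)
    rw [← (hb4 x hx).deriv, he.deriv_eq]
    exact (hdDR1 x hx).deriv
  rw [k4]
  have hu : a0 x * (a0 x)⁻¹ = 1 := mul_inv_cancel₀ (ha0ne x hx)
  have hv : b1 x * (b1 x)⁻¹ = 1 := mul_inv_cancel₀ (hb1ne x hx)
  linear_combination ((-3/2 : ℝ) * (a0 x * H0 x * P x * (b1 x)⁻¹)) * m2 + ((-3 : ℝ) * (a1 x * H0 x * P x * (b1 x)⁻¹) + a0 x * H1 x * P x + (21/2 : ℝ) * (a0 x * b2 x * H0 x * P x * (b1 x)⁻¹ ^ 2) + (-6 : ℝ) * (a0 x * b1 x * H1 x * P x * (b1 x)⁻¹) + (3 : ℝ) * (a0 x * a1 x * H0 x * P x * (a0 x)⁻¹ * (b1 x)⁻¹)) * (m1 x hx) + ((-1/2 : ℝ) * (a0 x * H0 x * P x * (a0 x)⁻¹) + (3/5 : ℝ) * (a0 x * b1 x * H0 x * P x * (a0 x)⁻¹ * (b1 x)⁻¹)) * (heqII x hx) + ((-3/2 : ℝ) * (a2 x * H0 x * P x *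 (b1 x)⁻¹) + (2 : ℝ) * (a1 x * H1 x * P x) + (27/2 : ℝ) * (a1 x * b2 x * H0 x * P x * (b1 x)⁻¹ ^ 2) + (-9 : ℝ) * (a1 x * b1 x * H1 x * P x * (b1 x)⁻¹) + (9/2 : ℝ) * (a1 x ^ 2 * H0 x * P x * (a0 x)⁻¹ * (b1 x)⁻¹) + (27/4 : ℝ) * (a0 x * b3 x * H0 x * P x * (b1 x)⁻¹ ^ 2) + (-12 : ℝ) * (a0 x * b2 x * H1 x * P x * (b1 x)⁻¹) + (-207/8 : ℝ) * (a0 x * b2 x ^ 2 * H0 x * P x * (b1 x)⁻¹ ^ 3) + (4 : ℝ) * (a0 x * b1 x * H2 x * P x) + (27 : ℝ) * (a0 x * b1 x * b2 x * H1 x * P x * (b1 x)⁻¹ ^ 2) + (-9 : ℝ) * (a0 x * b1 x ^ 2 * H2 x * P x * (b1 x)⁻¹) + (51/10 : ℝ) * (a0 x * a2 x * H0 x * P x * (a0 x)⁻¹ * (b1 x)⁻¹) + (-27/10 : ℝ) * (a0 x * a2 x * b1 x * H0 x * P x * (a0 x)⁻¹ * (b1 x)⁻¹ ^ 2) + (-2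 : ℝ) * (a0 x * a1 x * H1 x * P x * (a0 x)⁻¹) + (-27/2 : ℝ) * (a0 x * a1 x * b2 x * H0 x * P x * (a0 x)⁻¹ * (b1 x)⁻¹ ^ 2) + (9 : ℝ) * (a0 x * a1 x * b1 x * H1 x * P x * (a0 x)⁻¹ * (b1 x)⁻¹) + (-36/5 : ℝ) * (a0 x * a1 x ^ 2 * H0 x * P x * (a0 x)⁻¹ ^ 2 * (b1 x)⁻¹) + (81/40 : ℝ) * (a0 x * a1 x ^ 2 * b1 x * H0 x * P x * (a0 x)⁻¹ ^ 2 * (b1 x)⁻¹ ^ 2)) * (heqI x hx) + ((21/5 : ℝ) * (a3 x * b2 x * H0 x * P x * (b1 x)⁻¹) + (-12/5 : ℝ) * (a3 x * b1 x * H1 x * P x) + (-21/5 : ℝ) * (a3 x * b1 x * b2 x * H0 x * P x * (b1 x)⁻¹ ^ 2) + (12/5 : ℝ) * (a3 x * b1 x ^ 2 * H1 x * P x * (b1 x)⁻¹) + (-17/5 : ℝ) * (a2 x * b2 x * H1 x * P x) + (-39/5 : ℝ) * (a2 x * b2 x ^ 2 * H0 x * P x * (b1 x)⁻¹ ^ 2)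 + (81/5 : ℝ) * (a2 x * b1 x * b2 x * H1 x * P x * (b1 x)⁻¹) + (63/10 : ℝ) * (a2 x * b1 x * b2 x ^ 2 * H0 x * P x * (b1 x)⁻¹ ^ 3) + (-23/5 : ℝ) * (a2 x * b1 x ^ 2 * H2 x * P x) + (-54/5 : ℝ) * (a2 x * b1 x ^ 2 * b2 x * H1 x * P x * (b1 x)⁻¹ ^ 2) + (18/5 : ℝ) * (a2 x * b1 x ^ 3 * H2 x * P x * (b1 x)⁻¹) + (17/10 : ℝ) * (a2 x ^ 2 * H0 x * P x * (a0 x)⁻¹) + (-72/25 : ℝ) * (a2 x ^ 2 * b1 x * H0 x * P x * (a0 x)⁻¹ * (b1 x)⁻¹) + (27/25 : ℝ) * (a2 x ^ 2 * b1 x ^ 2 * H0 x * P x * (a0 x)⁻¹ * (b1 x)⁻¹ ^ 2) + (6 : ℝ) * (a1 x * b2 x ^ 2 * H1 x * P x * (b1 x)⁻¹) + (3/2 : ℝ) * (a1 x * b2 x ^ 3 * H0 x * P x * (b1 x)⁻¹ ^ 3) + (-6 : ℝ) * (a1 x * b1 x * b2 x * H2 x * P x) + (-9 : ℝ) * (a1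 x * b1 x * b2 x ^ 2 * H1 x * P x * (b1 x)⁻¹ ^ 2) + (9 : ℝ) * (a1 x * b1 x ^ 2 * b2 x * H2 x * P x * (b1 x)⁻¹) + (-2 : ℝ) * (a1 x * b1 x ^ 3 * H3 x * P x) + (5/2 : ℝ) * (a1 x * a3 x * H0 x * P x * (a0 x)⁻¹) + (-27/10 : ℝ) * (a1 x * a3 x * b1 x * H0 x * P x * (a0 x)⁻¹ * (b1 x)⁻¹) + (-177/10 : ℝ) * (a1 x * a2 x * b2 x * H0 x * P x * (a0 x)⁻¹ * (b1 x)⁻¹) + (54/5 : ℝ) * (a1 x * a2 x * b1 x * H1 x * P x * (a0 x)⁻¹) + (159/10 : ℝ) * (a1 x * a2 x * b1 x * b2 x * H0 x * P x * (a0 x)⁻¹ * (b1 x)⁻¹ ^ 2) + (-48/5 : ℝ) * (a1 x * a2 x * b1 x ^ 2 * H1 x * P x * (a0 x)⁻¹ * (b1 x)⁻¹) + (24/5 : ℝ) * (a1 x ^ 2 * b2 x * H1 x * P x * (a0 x)⁻¹) + (369/40 : ℝ) * (a1 x ^ 2 * b2 x ^ 2 * H0 x * P x * (a0 x)⁻¹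 * (b1 x)⁻¹ ^ 2) + (-189/10 : ℝ) * (a1 x ^ 2 * b1 x * b2 x * H1 x * P x * (a0 x)⁻¹ * (b1 x)⁻¹) + (-189/40 : ℝ) * (a1 x ^ 2 * b1 x * b2 x ^ 2 * H0 x * P x * (a0 x)⁻¹ * (b1 x)⁻¹ ^ 3) + (57/10 : ℝ) * (a1 x ^ 2 * b1 x ^ 2 * H2 x * P x * (a0 x)⁻¹) + (81/10 : ℝ) * (a1 x ^ 2 * b1 x ^ 2 * b2 x * H1 x * P x * (a0 x)⁻¹ * (b1 x)⁻¹ ^ 2) + (-27/10 : ℝ) * (a1 x ^ 2 * b1 x ^ 3 * H2 x * P x * (a0 x)⁻¹ * (b1 x)⁻¹) + (-201/20 : ℝ) * (a1 x ^ 2 * a2 x * H0 x * P x * (a0 x)⁻¹ ^ 2) + (1167/100 : ℝ) * (a1 x ^ 2 * a2 x * b1 x * H0 x * P x * (a0 x)⁻¹ ^ 2 * (b1 x)⁻¹) + (-81/50 : ℝ) * (a1 x ^ 2 * a2 x * b1 x ^ 2 * H0 x * P x * (a0 x)⁻¹ ^ 2 * (b1 x)⁻¹ ^ 2) + (279/20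 : ℝ) * (a1 x ^ 3 * b2 x * H0 x * P x * (a0 x)⁻¹ ^ 2 * (b1 x)⁻¹) + (-87/10 : ℝ) * (a1 x ^ 3 * b1 x * H1 x * P x * (a0 x)⁻¹ ^ 2) + (-207/20 : ℝ) * (a1 x ^ 3 * b1 x * b2 x * H0 x * P x * (a0 x)⁻¹ ^ 2 * (b1 x)⁻¹ ^ 2) + (63/10 : ℝ) * (a1 x ^ 3 * b1 x ^ 2 * H1 x * P x * (a0 x)⁻¹ ^ 2 * (b1 x)⁻¹) + (489/80 : ℝ) * (a1 x ^ 4 * H0 x * P x * (a0 x)⁻¹ ^ 3) + (-153/25 : ℝ) * (a1 x ^ 4 * b1 x * H0 x * P x * (a0 x)⁻¹ ^ 3 * (b1 x)⁻¹) + (243/400 : ℝ) * (a1 x ^ 4 * b1 x ^ 2 * H0 x * P x * (a0 x)⁻¹ ^ 3 * (b1 x)⁻¹ ^ 2)) * hu + ((-21/5 : ℝ) * (a3 x * b2 x * H0 x * P x * (b1 x)⁻¹) + (12/5 : ℝ) * (a3 x * b1 x * H1 x * P x) + (12/5 : ℝ) * (a2 x * b2 x * H1 x * P x) + (63/10 :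 ℝ) * (a2 x * b2 x ^ 2 * H0 x * P x * (b1 x)⁻¹ ^ 2) + (-54/5 : ℝ) * (a2 x * b1 x * b2 x * H1 x * P x * (b1 x)⁻¹) + (18/5 : ℝ) * (a2 x * b1 x ^ 2 * H2 x * P x) + (-6/5 : ℝ) * (a2 x ^ 2 * H0 x * P x * (a0 x)⁻¹) + (27/25 : ℝ) * (a2 x ^ 2 * b1 x * H0 x * P x * (a0 x)⁻¹ * (b1 x)⁻¹) + (-3/2 : ℝ) * (a1 x * a3 x * H0 x * P x * (a0 x)⁻¹) + (21/2 : ℝ) * (a1 x * a2 x * b2 x * H0 x * P x * (a0 x)⁻¹ * (b1 x)⁻¹) + (-6 : ℝ) * (a1 x * a2 x * b1 x * H1 x * P x * (a0 x)⁻¹) + (-9/5 : ℝ) * (a1 x ^ 2 * b2 x * H1 x * P x * (a0 x)⁻¹) + (-189/40 : ℝ) * (a1 x ^ 2 * b2 x ^ 2 * H0 x * P x * (a0 x)⁻¹ * (b1 x)⁻¹ ^ 2) + (81/10 : ℝ) * (a1 x ^ 2 * b1 x * b2 x * H1 x * P x * (a0 x)⁻¹ * (b1 x)⁻¹) + (-27/10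 : ℝ) * (a1 x ^ 2 * b1 x ^ 2 * H2 x * P x * (a0 x)⁻¹) + (24/5 : ℝ) * (a1 x ^ 2 * a2 x * H0 x * P x * (a0 x)⁻¹ ^ 2) + (-81/50 : ℝ) * (a1 x ^ 2 * a2 x * b1 x * H0 x * P x * (a0 x)⁻¹ ^ 2 * (b1 x)⁻¹) + (-63/10 : ℝ) * (a1 x ^ 3 * b2 x * H0 x * P x * (a0 x)⁻¹ ^ 2 * (b1 x)⁻¹) + (18/5 : ℝ) * (a1 x ^ 3 * b1 x * H1 x * P x * (a0 x)⁻¹ ^ 2) + (-189/80 : ℝ) * (a1 x ^ 4 * H0 x * P x * (a0 x)⁻¹ ^ 3) + (243/400 : ℝ) * (a1 x ^ 4 * b1 x * H0 x * P x * (a0 x)⁻¹ ^ 3 * (b1 x)⁻¹) + (-3 : ℝ) * (a0 x * b2 x ^ 2 * H2 x * P x) + (-3 : ℝ) * (a0 x * b2 x ^ 3 * H1 x * P x * (b1 x)⁻¹ ^ 2) + (9 : ℝ) * (a0 x * b1 x * b2 x ^ 2 * H2 x * P x * (b1 x)⁻¹) + (-6 : ℝ) * (a0 x * b1 x ^ 2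 * b2 x * H3 x * P x)) * hv

set_option maxHeartbeats 2000000 in
/-- pulling back a solution of the uniform beam equation by the
transformation `T = t + k₁`, `X = g(x) + k₂`, `U = k₃·u·√(f·g'³)` yields a solution
of the Euler–Bernoulli equation `(f·u_xx)_xx + g'⁴·f·u_tt = 0`, provided `f, g`
satisfy Eqs. (I) and (II). -/
theorem statement0
    (I : Set ℝ) (hIopen : IsOpen I) (hIinterval : I.OrdConnected)
    (f g : ℝ → ℝ)
    (hf : ContDiffOn ℝ (⊤ : ℕ∞) f I) (hg : ContDiffOn ℝ (⊤ : ℕ∞) g I)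
    (hfpos : ∀ x ∈ I, 0 < f x) (hg' : ∀ x ∈ I, 0 < deriv g x)
    (hEqI : ∀ x ∈ I, SatEqI f g x) (hEqII : ∀ x ∈ I, SatEqII f x)
    (k₁ k₂ k₃ : ℝ) (hk₃ : k₃ ≠ 0)
    (U : ℝ → ℝ → ℝ)
    (hU : ContDiff ℝ (⊤ : ℕ∞) (fun p : ℝ × ℝ => U p.1 p.2))
    (hUbeam : ∀ T X : ℝ,
      iteratedDeriv 2 (fun s => U s X) T + iteratedDeriv 4 (fun y => U T y) X = 0)
    (u : ℝ → ℝ → ℝ)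
    (hu : u = fun t x => U (t + k₁) (g x + k₂) / (k₃ * Real.sqrt (f x * (deriv g x)^3))) :
    ∀ t : ℝ, ∀ x ∈ I,
      deriv (deriv (fun y => f y * iteratedDeriv 2 (fun y' => u t y') y)) x
        + (deriv g x)^4 * f x * iteratedDeriv 2 (fun s => u s x) t = 0 := by
  intro t x hx
  have hfne : ∀ y ∈ I, f y ≠ 0 := fun y hy => (hfpos y hy).ne'
  have hgne : ∀ y ∈ I, deriv g y ≠ 0 := fun y hy => (hg' y hy).ne'
  have hf0 : ∀ y ∈ I, HasDerivAt f (deriv f y) y := by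
    intro y hy; simpa using hasDerivAt_iterate_deriv I hIopen f hf 0 y hy
  have hf1 : ∀ y ∈ I, HasDerivAt (deriv f) (deriv^[2] f y) y := by
    intro y hy; simpa using hasDerivAt_iterate_deriv I hIopen f hf 1 y hy
  have hf2 : ∀ y ∈ I, HasDerivAt (deriv^[2] f) (deriv^[3] f y) y := by
    intro y hy; simpa using hasDerivAt_iterate_deriv I hIopen f hf 2 y hy
  have hf3 : ∀ y ∈ I, HasDerivAt (deriv^[3] f) (deriv^[4] f y) y := by
    intro y hy; simpa using hasDerivAt_iterate_deriv I hIopen f hf 3 y hy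
  have hg0 : ∀ y ∈ I, HasDerivAt g (deriv g y) y := by
    intro y hy; simpa using hasDerivAt_iterate_deriv I hIopen g hg 0 y hy
  have hg1 : ∀ y ∈ I, HasDerivAt (deriv g) (deriv^[2] g y) y := by
    intro y hy; simpa using hasDerivAt_iterate_deriv I hIopen g hg 1 y hy
  have hg2 : ∀ y ∈ I, HasDerivAt (deriv^[2] g) (deriv^[3] g y) y := by
    intro y hy; simpa using hasDerivAt_iterate_deriv I hIopen g hg 2 y hy
  have hg3 : ∀ y ∈ I, HasDerivAt (deriv^[3] g) (deriv^[4] g y) y := by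
    intro y hy; simpa using hasDerivAt_iterate_deriv I hIopen g hg 3 y hy
  have hg4 : ∀ y ∈ I, HasDerivAt (deriv^[4] g) (deriv^[5] g y) y := by
    intro y hy; simpa using hasDerivAt_iterate_deriv I hIopen g hg 4 y hy
  have hhsm : ContDiff ℝ (⊤ : ℕ∞) (fun w => U (t + k₁) w) :=
    hU.comp ((contDiff_const (c := t + k₁)).prodMk contDiff_id)
  have hH0 : ∀ y ∈ I, HasDerivAt (fun z => iteratedDeriv 0 (fun w => U (t + k₁) w) (g z + k₂))
      (iteratedDeriv 1 (fun w => U (t + k₁) w) (g y + k₂) * deriv g y) y := fun y hy =>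
    hasDerivAt_iteratedDeriv_comp I hIopen g hg _ hhsm k₂ 0 y hy
  have hH1 : ∀ y ∈ I, HasDerivAt (fun z => iteratedDeriv 1 (fun w => U (t + k₁) w) (g z + k₂))
      (iteratedDeriv 2 (fun w => U (t + k₁) w) (g y + k₂) * deriv g y) y := fun y hy =>
    hasDerivAt_iteratedDeriv_comp I hIopen g hg _ hhsm k₂ 1 y hy
  have hH2 : ∀ y ∈ I, HasDerivAt (fun z => iteratedDeriv 2 (fun w => U (t + k₁) w) (g z + k₂))
      (iteratedDeriv 3 (fun w => U (t + k₁) w) (g y + k₂) * deriv g y) y := fun y hy =>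
    hasDerivAt_iteratedDeriv_comp I hIopen g hg _ hhsm k₂ 2 y hy
  have hH3 : ∀ y ∈ I, HasDerivAt (fun z => iteratedDeriv 3 (fun w => U (t + k₁) w) (g z + k₂))
      (iteratedDeriv 4 (fun w => U (t + k₁) w) (g y + k₂) * deriv g y) y := fun y hy =>
    hasDerivAt_iteratedDeriv_comp I hIopen g hg _ hhsm k₂ 3 y hy
  have hPd : ∀ y ∈ I, HasDerivAt (fun z => (k₃ * Real.sqrt (f z * deriv g z ^ 3))⁻¹)
      ((-3/2 : ℝ) * (deriv^[2] g y * (k₃ * Real.sqrt (f y * deriv g y ^ 3))⁻¹ * (deriv g y)⁻¹)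
        + (-1/2 : ℝ) * (deriv f y * (k₃ * Real.sqrt (f y * deriv g y ^ 3))⁻¹ * (f y)⁻¹)) y := by
    intro y hy
    have hSpos : 0 < f y * deriv g y ^ 3 := mul_pos (hfpos y hy) (pow_pos (hg' y hy) 3)
    have hS : HasDerivAt (fun z => f z * deriv g z ^ 3)
        (deriv f y * deriv g y ^ 3 + f y * ((3 : ℕ) * deriv g y ^ 2 * deriv^[2] g y)) y :=
      (hf0 y hy).mul ((hg1 y hy).pow 3)
    have hsq := hS.sqrt hSpos.ne'
    have hmul := hsq.const_mul k₃
    have hsne : Real.sqrt (f y * deriv g y ^ 3) ≠ 0 := (Real.sqrt_pos.mpr hSpos).ne'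
    have hDne : k₃ * Real.sqrt (f y * deriv g y ^ 3) ≠ 0 := mul_ne_zero hk₃ hsne
    refine (hmul.inv hDne).congr_deriv ?_
    have hss : Real.sqrt (f y * deriv g y ^ 3) ^ 2 = f y * deriv g y ^ 3 :=
      Real.sq_sqrt hSpos.le
    have h1 : f y ≠ 0 := hfne y hy
    have h2 : deriv g y ≠ 0 := hgne y hy
    set s := Real.sqrt (f y * deriv g y ^ 3) with hsdef
    have key : deriv f y * deriv g y ^ 3 + f y * ((3 : ℕ) * deriv g y ^ 2 * deriv^[2] g y)
        = (3 * deriv^[2] g y * (deriv g y)⁻¹ + deriv f y * (f y)⁻¹) * (f y * deriv g y ^ 3) := by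
      field_simp; ring
    rw [key, show (k₃ * s) ^ 2 = k₃ ^ 2 * (f y * deriv g y ^ 3) from by rw [mul_pow, hss]]
    field_simp
    ring
  have heqI' : ∀ y ∈ I, deriv^[3] g y =
      (3/2 : ℝ) * (deriv^[2] g y ^ 2 * (deriv g y)⁻¹)
        + (-2/5 : ℝ) * (deriv^[2] f y * deriv g y * (f y)⁻¹)
        + (3/10 : ℝ) * (deriv f y ^ 2 * deriv g y * (f y)⁻¹ ^ 2) := by
    intro y hy
    have e : deriv^[3] g y =
        (3/10) * deriv g y * (deriv f y)^2 / (f y)^2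
          - (2/5) * deriv g y * (deriv^[2] f y) / f y
          + (3/2) * (deriv^[2] g y)^2 / deriv g y := hEqI y hy
    rw [e]; ring
  have heqII' : ∀ y ∈ I, deriv^[4] f y =
      (11/10 : ℝ) * (deriv^[2] f y ^ 2 * (f y)⁻¹)
        + deriv f y * deriv^[3] f y * (f y)⁻¹
        + (-12/5 : ℝ) * (deriv f y ^ 2 * deriv^[2] f y * (f y)⁻¹ ^ 2)
        + (9/10 : ℝ) * (deriv f y ^ 4 * (f y)⁻¹ ^ 3) := by
    intro y hy
    have e : deriv^[4] f y =
        deriv f y * (deriv^[3] f y) / f y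
          + (11/10) * (deriv^[2] f y)^2 / f y
          - (12/5) * (deriv f y)^2 * (deriv^[2] f y) / (f y)^2
          + (9/10) * (deriv f y)^4 / (f y)^3 := hEqII y hy
    rw [e]; ring
  have hcore : deriv (deriv (fun y => f y * deriv (deriv (fun z =>
        iteratedDeriv 0 (fun w => U (t + k₁) w) (g z + k₂) *
          (k₃ * Real.sqrt (f z * deriv g z ^ 3))⁻¹)) y)) x
      = f x * deriv g x ^ 4 * iteratedDeriv 4 (fun w => U (t + k₁) w) (g x + k₂) *
          (k₃ * Real.sqrt (f x * deriv g x ^ 3))⁻¹ :=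
    core_calc I hIopen f (deriv f) (deriv^[2] f) (deriv^[3] f) (deriv^[4] f)
      (deriv g) (deriv^[2] g) (deriv^[3] g) (deriv^[4] g) (deriv^[5] g)
      (fun z => iteratedDeriv 0 (fun w => U (t + k₁) w) (g z + k₂))
      (fun z => iteratedDeriv 1 (fun w => U (t + k₁) w) (g z + k₂))
      (fun z => iteratedDeriv 2 (fun w => U (t + k₁) w) (g z + k₂))
      (fun z => iteratedDeriv 3 (fun w => U (t + k₁) w) (g z + k₂))
      (fun z => iteratedDeriv 4 (fun w => U (t + k₁) w) (g z + k₂))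
      (fun z => (k₃ * Real.sqrt (f z * deriv g z ^ 3))⁻¹)
      hf0 hf1 hf2 hf3 hg1 hg2 hg3 hg4 hH0 hH1 hH2 hH3 hPd hfne hgne heqI' heqII' x hx
  have hxpart : (fun y => f y * iteratedDeriv 2 (fun y' => u t y') y)
      = (fun y => f y * deriv (deriv (fun z =>
          iteratedDeriv 0 (fun w => U (t + k₁) w) (g z + k₂) *
            (k₃ * Real.sqrt (f z * deriv g z ^ 3))⁻¹)) y) := by
    have e0 : (fun y' => u t y') = (fun z =>
        iteratedDeriv 0 (fun w => U (t + k₁) w) (g z + k₂) *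
          (k₃ * Real.sqrt (f z * deriv g z ^ 3))⁻¹) := by
      funext z
      simp only [hu, iteratedDeriv_zero, div_eq_mul_inv]
    funext y
    rw [e0, show (2 : ℕ) = 1 + 1 from rfl, iteratedDeriv_succ, iteratedDeriv_one]
  have htime : iteratedDeriv 2 (fun s => u s x) t
      = -(iteratedDeriv 4 (fun w => U (t + k₁) w) (g x + k₂)) *
          (k₃ * Real.sqrt (f x * deriv g x ^ 3))⁻¹ := by
    have e0 : (fun s => u s x) = (fun s =>
        (fun w => U w (g x + k₂) / (k₃ * Real.sqrt (f x * deriv g x ^ 3))) (s + k₁)) := by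
      funext s; simp only [hu]
    rw [e0, iteratedDeriv_comp_add_const 2
      (fun w => U w (g x + k₂) / (k₃ * Real.sqrt (f x * deriv g x ^ 3))) k₁]
    beta_reduce
    have e1 : deriv (fun w => U w (g x + k₂) / (k₃ * Real.sqrt (f x * deriv g x ^ 3)))
        = fun w => deriv (fun w' => U w' (g x + k₂)) w /
            (k₃ * Real.sqrt (f x * deriv g x ^ 3)) := by
      funext w; exact deriv_div_const _
    rw [show (2 : ℕ) = 1 + 1 from rfl, iteratedDeriv_succ, iteratedDeriv_one, e1,
      deriv_div_const]
    have e4 : deriv (fun w => deriv (fun w' => U w' (g x + k₂)) w) (t + k₁)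
        = iteratedDeriv 2 (fun s => U s (g x + k₂)) (t + k₁) := by
      rw [show (2 : ℕ) = 1 + 1 from rfl, iteratedDeriv_succ, iteratedDeriv_one]
    rw [e4, show iteratedDeriv 2 (fun s => U s (g x + k₂)) (t + k₁)
        = -(iteratedDeriv 4 (fun w => U (t + k₁) w) (g x + k₂)) from by
          linarith [hUbeam (t + k₁) (g x + k₂)], div_eq_mul_inv]
  rw [hxpart, hcore, htime]
  ring
end

section
/- Let K > 0, A ≠ 0, B ∈ ℝ, m ∈ {3/2, 5/2}, and let L, M, P, Q be real constants with L·Q − M·P ≠ 0. Let I be a nonempty open interval on which Ax + B > 0 and P·(Ax+B)^{1/4} + Q·(Ax+B)^{3/4} ≠ 0. Then the pair f(x) = K·(Ax+B)^m, g(x) = (L·(Ax+B)^{1/4} + M·(Ax+B)^{3/4}) / (P·(Ax+B)^{1/4} + Q·(Ax+B)^{3/4}) satisfies g' ≠ 0 on I and satisfies both Eq. (I) and Eq. (II) at every point of I. -/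
set_option maxHeartbeats 1000000

private lemma deriv_congr_on {U : Set ℝ} (hU : IsOpen U) {h H H' : ℝ → ℝ}
    (heq : ∀ y ∈ U, h y = H y) (hd : ∀ y ∈ U, HasDerivAt H (H' y) y) :
    ∀ y ∈ U, deriv h y = H' y := by
  intro y hy
  have hev : h =ᶠ[nhds y] H := Filter.eventuallyEq_of_mem (hU.mem_nhds hy) heq
  rw [hev.deriv_eq, (hd y hy).deriv]

private lemma hasDerivAt_affine_rpow (A B c p y : ℝ) (hy : 0 < A * y + B) :
    HasDerivAt (fun z => c * (A * z + B) ^ p) (c * p * A * (A * y + B) ^ (p - 1)) y := by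
  have h1 : HasDerivAt (fun z : ℝ => A * z + B) A y := by
    simpa using ((hasDerivAt_id y).const_mul A).add_const B
  have h2 := (Real.hasDerivAt_rpow_const (x := A * y + B) (p := p) (Or.inl hy.ne')).comp y h1
  have h3 := h2.const_mul c
  refine h3.congr_deriv ?_
  symm
  ring

private lemma hasDerivAt_sqrtfun (A B y : ℝ) (hy : 0 < A * y + B) :
    HasDerivAt (fun z => (A * z + B) ^ ((1:ℝ)/2)) (A / (2 * (A * y + B) ^ ((1:ℝ)/2))) y := by
  have h := hasDerivAt_affine_rpow A B 1 ((1:ℝ)/2) y hy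
  have hs0 : (A * y + B) ^ ((1:ℝ)/2) ≠ 0 := (Real.rpow_pos_of_pos hy _).ne'
  have hval : (1:ℝ) * ((1:ℝ)/2) * A * (A * y + B) ^ ((1:ℝ)/2 - 1)
      = A / (2 * (A * y + B) ^ ((1:ℝ)/2)) := by
    rw [show (1:ℝ)/2 - 1 = -(1/2) by norm_num, Real.rpow_neg hy.le]
    field_simp
  rw [hval] at h
  simpa using h

/-- for `m ∈ {3/2, 5/2}`, the pair `f = K(Ax+B)^m`,
`g = (L(Ax+B)^{1/4} + M(Ax+B)^{3/4})/(P(Ax+B)^{1/4} + Q(Ax+B)^{3/4})` (with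
`LQ − MP ≠ 0`) satisfies `g' ≠ 0` and Eqs. (I) and (II) on `I`. -/
theorem statement12
    (K A B m : ℝ) (hK : 0 < K) (hA : A ≠ 0) (hm : m ∈ ({3/2, 5/2} : Set ℝ))
    (L M P Q : ℝ) (hLQMP : L * Q - M * P ≠ 0)
    (I : Set ℝ) (hIopen : IsOpen I) (hIinterval : I.OrdConnected) (hIne : I.Nonempty)
    (hIpos : ∀ x ∈ I, 0 < A * x + B)
    (hden : ∀ x ∈ I, P * (A * x + B) ^ ((1:ℝ)/4) + Q * (A * x + B) ^ ((3:ℝ)/4) ≠ 0)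
    (f g : ℝ → ℝ)
    (hf : f = fun x => K * (A * x + B) ^ m)
    (hg : g = fun x =>
      (L * (A * x + B) ^ ((1:ℝ)/4) + M * (A * x + B) ^ ((3:ℝ)/4))
        / (P * (A * x + B) ^ ((1:ℝ)/4) + Q * (A * x + B) ^ ((3:ℝ)/4))) :
    ∀ x ∈ I, deriv g x ≠ 0 ∧ SatEqI f g x ∧ SatEqII f x := by
  have hc0 : A * (M * P - L * Q) / 2 ≠ 0 := by
    apply div_ne_zero (mul_ne_zero hA ?_) two_ne_zero
    intro h; apply hLQMP; linarith
  set c : ℝ := A * (M * P - L * Q) / 2 with hc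
  clear_value c
  have hspos : ∀ y ∈ I, 0 < (A * y + B) ^ ((1:ℝ)/2) :=
    fun y hy => Real.rpow_pos_of_pos (hIpos y hy) _
  have hsne : ∀ y ∈ I, (A * y + B) ^ ((1:ℝ)/2) ≠ 0 := fun y hy => (hspos y hy).ne'
  have hfactor : ∀ y ∈ I, ∀ a b : ℝ,
      a * (A * y + B) ^ ((1:ℝ)/4) + b * (A * y + B) ^ ((3:ℝ)/4)
        = (A * y + B) ^ ((1:ℝ)/4) * (a + b * (A * y + B) ^ ((1:ℝ)/2)) := by
    intro y hy a b
    rw [show (3:ℝ)/4 = 1/4 + 1/2 by norm_num, Real.rpow_add (hIpos y hy)]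
    ring
  have hDne : ∀ y ∈ I, P + Q * (A * y + B) ^ ((1:ℝ)/2) ≠ 0 := by
    intro y hy h0
    apply hden y hy
    rw [hfactor y hy P Q, h0, mul_zero]
  have hgeq : ∀ y ∈ I, g y = (L + M * (A * y + B) ^ ((1:ℝ)/2))
      / (P + Q * (A * y + B) ^ ((1:ℝ)/2)) := by
    intro y hy
    rw [hg]
    simp only
    rw [hfactor y hy L M, hfactor y hy P Q,
      mul_div_mul_left _ _ (Real.rpow_pos_of_pos (hIpos y hy) ((1:ℝ)/4)).ne']
  -- derivative chain for g
  have hd0 : ∀ y ∈ I, HasDerivAt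
      (fun z => (L + M * (A * z + B) ^ ((1:ℝ)/2)) / (P + Q * (A * z + B) ^ ((1:ℝ)/2)))
      ((fun z => c / ((A * z + B) ^ ((1:ℝ)/2) * (P + Q * (A * z + B) ^ ((1:ℝ)/2))^2)) y) y := by
    intro y hy
    have hs := hasDerivAt_sqrtfun A B y (hIpos y hy)
    have hnum := (hs.const_mul M).const_add L
    have hden' := (hs.const_mul Q).const_add P
    have h := hnum.div hden' (hDne y hy)
    refine h.congr_deriv ?_
    symm
    beta_reduce
    have h1 := hsne y hy
    have h2 := hDne y hy
    set S := (A * y + B) ^ ((1:ℝ)/2) with hS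
    rw [hc]
    field_simp
    ring
  have hd1 : ∀ y ∈ I, HasDerivAt
      (fun z => c / ((A * z + B) ^ ((1:ℝ)/2) * (P + Q * (A * z + B) ^ ((1:ℝ)/2))^2))
      ((fun z => -(A * c / 2) * ((P + Q * (A * z + B) ^ ((1:ℝ)/2)) + 2 * Q * (A * z + B) ^ ((1:ℝ)/2))
        / (((A * z + B) ^ ((1:ℝ)/2)) ^ 3 * (P + Q * (A * z + B) ^ ((1:ℝ)/2))^3)) y) y := by
    intro y hy
    have hs := hasDerivAt_sqrtfun A B y (hIpos y hy)
    have hD := (hs.const_mul Q).const_add P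
    have hmul := hs.mul (hD.pow 2)
    have hne : (A * y + B) ^ ((1:ℝ)/2) * (P + Q * (A * y + B) ^ ((1:ℝ)/2))^2 ≠ 0 :=
      mul_ne_zero (hsne y hy) (pow_ne_zero 2 (hDne y hy))
    have h := (hasDerivAt_const y c).div hmul hne
    refine h.congr_deriv ?_
    symm
    simp only [Pi.pow_apply, Pi.mul_apply, Pi.add_apply]
    have h1 := hsne y hy
    have h2 := hDne y hy
    set S := (A * y + B) ^ ((1:ℝ)/2) with hS
    norm_num
    field_simp
  have hd2 : ∀ y ∈ I, HasDerivAt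
      (fun z => -(A * c / 2) * ((P + Q * (A * z + B) ^ ((1:ℝ)/2)) + 2 * Q * (A * z + B) ^ ((1:ℝ)/2))
        / (((A * z + B) ^ ((1:ℝ)/2)) ^ 3 * (P + Q * (A * z + B) ^ ((1:ℝ)/2))^3))
      ((fun z => (A^2 * c / 4) * (3 / (((A * z + B) ^ ((1:ℝ)/2)) ^ 5 * (P + Q * (A * z + B) ^ ((1:ℝ)/2))^2)
        + 6 * Q / (((A * z + B) ^ ((1:ℝ)/2)) ^ 4 * (P + Q * (A * z + B) ^ ((1:ℝ)/2))^3)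
        + 6 * Q^2 / (((A * z + B) ^ ((1:ℝ)/2)) ^ 3 * (P + Q * (A * z + B) ^ ((1:ℝ)/2))^4))) y) y := by
    intro y hy
    have hs := hasDerivAt_sqrtfun A B y (hIpos y hy)
    have hD := (hs.const_mul Q).const_add P
    have hnum := (hD.add (hs.const_mul (2 * Q))).const_mul (-(A * c / 2))
    have hdenf := (hs.pow 3).mul (hD.pow 3)
    have hne : ((A * y + B) ^ ((1:ℝ)/2)) ^ 3 * (P + Q * (A * y + B) ^ ((1:ℝ)/2))^3 ≠ 0 :=
      mul_ne_zero (pow_ne_zero 3 (hsne y hy)) (pow_ne_zero 3 (hDne y hy))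
    have h := hnum.div hdenf hne
    refine h.congr_deriv ?_
    symm
    simp only [Pi.pow_apply, Pi.mul_apply, Pi.add_apply]
    have h1 := hsne y hy
    have h2 := hDne y hy
    set S := (A * y + B) ^ ((1:ℝ)/2) with hS
    norm_num
    field_simp
    ring
  have hgd1 : ∀ y ∈ I, deriv g y
      = c / ((A * y + B) ^ ((1:ℝ)/2) * (P + Q * (A * y + B) ^ ((1:ℝ)/2))^2) :=
    deriv_congr_on hIopen hgeq hd0
  have hgd2 : ∀ y ∈ I, deriv (deriv g) y
      = -(A * c / 2) * ((P + Q * (A * y + B) ^ ((1:ℝ)/2)) + 2 * Q * (A * y + B) ^ ((1:ℝ)/2))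
        / (((A * y + B) ^ ((1:ℝ)/2)) ^ 3 * (P + Q * (A * y + B) ^ ((1:ℝ)/2))^3) :=
    deriv_congr_on hIopen hgd1 hd1
  have hgd3 : ∀ y ∈ I, deriv (deriv (deriv g)) y
      = (A^2 * c / 4) * (3 / (((A * y + B) ^ ((1:ℝ)/2)) ^ 5 * (P + Q * (A * y + B) ^ ((1:ℝ)/2))^2)
        + 6 * Q / (((A * y + B) ^ ((1:ℝ)/2)) ^ 4 * (P + Q * (A * y + B) ^ ((1:ℝ)/2))^3)
        + 6 * Q^2 / (((A * y + B) ^ ((1:ℝ)/2)) ^ 3 * (P + Q * (A * y + B) ^ ((1:ℝ)/2))^4)) :=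
    deriv_congr_on hIopen hgd2 hd2
  -- derivative chain for f
  have hfeq : ∀ y ∈ I, f y = K * (A * y + B) ^ m := fun y _ => by rw [hf]
  have hfd1 : ∀ y ∈ I, deriv f y = K * m * A * (A * y + B) ^ (m - 1) :=
    deriv_congr_on hIopen hfeq
      (fun y hy => hasDerivAt_affine_rpow A B K m y (hIpos y hy))
  have hfd2 : ∀ y ∈ I, deriv (deriv f) y = K * m * A * (m-1) * A * (A * y + B) ^ (m - 1 - 1) :=
    deriv_congr_on hIopen hfd1
      (fun y hy => hasDerivAt_affine_rpow A B (K * m * A) (m-1) y (hIpos y hy))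
  have hfd3 : ∀ y ∈ I, deriv (deriv (deriv f)) y
      = K * m * A * (m-1) * A * (m-1-1) * A * (A * y + B) ^ (m - 1 - 1 - 1) :=
    deriv_congr_on hIopen hfd2
      (fun y hy => hasDerivAt_affine_rpow A B (K * m * A * (m-1) * A) (m-1-1) y (hIpos y hy))
  have hfd4 : ∀ y ∈ I, deriv (deriv (deriv (deriv f))) y
      = K * m * A * (m-1) * A * (m-1-1) * A * (m-1-1-1) * A * (A * y + B) ^ (m - 1 - 1 - 1 - 1) :=
    deriv_congr_on hIopen hfd3
      (fun y hy => hasDerivAt_affine_rpow A B (K * m * A * (m-1) * A * (m-1-1) * A) (m-1-1-1) y (hIpos y hy))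
  -- now fix x
  intro x hx
  have hux : 0 < A * x + B := hIpos x hx
  have hune : A * x + B ≠ 0 := hux.ne'
  have hsx : 0 < (A * x + B) ^ ((1:ℝ)/2) := hspos x hx
  have hsx2 : ((A * x + B) ^ ((1:ℝ)/2)) ^ (2:ℕ) = A * x + B := by
    rw [← Real.rpow_natCast ((A * x + B) ^ ((1:ℝ)/2)) 2, ← Real.rpow_mul hux.le]
    norm_num
  have hDx := hDne x hx
  have hg1ne : deriv g x ≠ 0 := by
    rw [hgd1 x hx]
    exact div_ne_zero hc0 (mul_ne_zero (hsne x hx) (pow_ne_zero 2 hDx))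
  have hTpos : (0:ℝ) < (A * x + B) ^ m := Real.rpow_pos_of_pos hux m
  have hmm : m = 3/2 ∨ m = 5/2 := by
    rcases hm with hm | hm
    · exact Or.inl hm
    · exact Or.inr hm
  refine ⟨hg1ne, ?_, ?_⟩
  · -- Eq. (I)
    unfold SatEqI
    have i3 : deriv^[3] g x = deriv (deriv (deriv g)) x := rfl
    have i2g : deriv^[2] g x = deriv (deriv g) x := rfl
    have i2f : deriv^[2] f x = deriv (deriv f) x := rfl
    rw [i3, i2g, i2f, hgd1 x hx, hgd2 x hx, hgd3 x hx, hfd1 x hx, hfd2 x hx, hf]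
    simp only
    rw [Real.rpow_sub_one hune (m-1), Real.rpow_sub_one hune m]
    set S := (A * x + B) ^ ((1:ℝ)/2) with hS
    rw [← hsx2]
    set T := (S ^ (2:ℕ)) ^ m with hT
    have hTne : T ≠ 0 := by rw [hT, hsx2]; exact hTpos.ne'
    have hSne : S ≠ 0 := hsx.ne'
    clear_value S T
    rcases hmm with hm' | hm' <;> rw [hm'] <;> field_simp <;> ring
  · -- Eq. (II)
    unfold SatEqII
    have i4 : deriv^[4] f x = deriv (deriv (deriv (deriv f))) x := rfl
    have i3 : deriv^[3] f x = deriv (deriv (deriv f)) x := rfl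
    have i2 : deriv^[2] f x = deriv (deriv f) x := rfl
    rw [i4, i3, i2, hfd1 x hx, hfd2 x hx, hfd3 x hx, hfd4 x hx, hf]
    simp only
    rw [Real.rpow_sub_one hune (m-1-1-1), Real.rpow_sub_one hune (m-1-1),
      Real.rpow_sub_one hune (m-1), Real.rpow_sub_one hune m]
    set T := (A * x + B) ^ m with hT
    set U := A * x + B with hU
    have hTne : T ≠ 0 := hTpos.ne'
    have hUne : U ≠ 0 := hune
    clear_value T U
    rcases hmm with hm' | hm' <;> rw [hm'] <;> field_simp <;> ring
end

section
/- Let K > 0, A ≠ 0, B ∈ ℝ, m ∈ {0, 4}, and let L, M, P, Q be real constants with L·Q − M·P ≠ 0. Let I be a nonempty open interval on which Ax + B > 0 and P + Q·(Ax+B) ≠ 0. Then the pair f(x) = K·(Ax+B)^m, g(x) = (L + M·(Ax+B)) / (P + Q·(Ax+B)) satisfies g' ≠ 0 on I and satisfies both Eq. (I) and Eq. (II) at every point of I. -/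
set_option maxHeartbeats 1600000 in
/-- for `m ∈ {0, 4}`, the pair `f = K(Ax+B)^m`,
`g = (L + M(Ax+B))/(P + Q(Ax+B))` (with `LQ − MP ≠ 0`) satisfies `g' ≠ 0` and
Eqs. (I) and (II) on `I`. -/
theorem statement13
    (K A B m : ℝ) (hK : 0 < K) (hA : A ≠ 0) (hm : m ∈ ({0, 4} : Set ℝ))
    (L M P Q : ℝ) (hLQMP : L * Q - M * P ≠ 0)
    (I : Set ℝ) (hIopen : IsOpen I) (hIinterval : I.OrdConnected) (hIne : I.Nonempty)
    (hIpos : ∀ x ∈ I, 0 < A * x + B)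
    (hden : ∀ x ∈ I, P + Q * (A * x + B) ≠ 0)
    (f g : ℝ → ℝ)
    (hf : f = fun x => K * (A * x + B) ^ m)
    (hg : g = fun x => (L + M * (A * x + B)) / (P + Q * (A * x + B))) :
    ∀ x ∈ I, deriv g x ≠ 0 ∧ SatEqI f g x ∧ SatEqII f x := by
  have hC : M * P - L * Q ≠ 0 := fun h => hLQMP (by linarith)
  set c : ℝ := A * (M * P - L * Q) with hc_def
  have hc : c ≠ 0 := mul_ne_zero hA hC
  set d : ℝ → ℝ := fun x => P + Q * (A * x + B) with hd_def
  have hu : ∀ x : ℝ, HasDerivAt (fun x => A * x + B) A x := by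
    intro x; simpa using ((hasDerivAt_id x).const_mul A).add_const B
  have hdd : ∀ x : ℝ, HasDerivAt d (Q * A) x := fun x => ((hu x).const_mul Q).const_add P
  set g1 : ℝ → ℝ := fun x => c / (d x) ^ 2 with hg1_def
  set g2 : ℝ → ℝ := fun x => -2 * Q * A * c / (d x) ^ 3 with hg2_def
  set g3 : ℝ → ℝ := fun x => 6 * Q ^ 2 * A ^ 2 * c / (d x) ^ 4 with hg3_def
  -- first derivative of g
  have hgd : ∀ x ∈ I, HasDerivAt g (g1 x) x := by
    intro x hx
    have hnum : HasDerivAt (fun x => L + M * (A * x + B)) (M * A) x :=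
      ((hu x).const_mul M).const_add L
    have hdiv := hnum.div (hdd x) (hden x hx)
    rw [hg]
    refine hdiv.congr_deriv ?_
    have h0 : d x ≠ 0 := hden x hx
    simp only [hg1_def, hc_def, hd_def, Pi.pow_apply] at h0 ⊢
    field_simp [hg1_def, hc_def]
    ring
  have heq1 : Set.EqOn (deriv g) g1 I := fun x hx => (hgd x hx).deriv
  -- second derivative
  have hg1d : ∀ x ∈ I, HasDerivAt g1 (g2 x) x := by
    intro x hx
    have h0 : d x ≠ 0 := hden x hx
    have := (hasDerivAt_const x c).div ((hdd x).pow 2) (pow_ne_zero 2 h0)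
    refine this.congr_deriv ?_
    simp only [hg2_def, Pi.pow_apply]
    field_simp [hg2_def]
    ring
  have hderiv2 : ∀ x ∈ I, deriv (deriv g) x = g2 x := by
    intro x hx
    have hev : deriv g =ᶠ[nhds x] g1 :=
      Filter.eventuallyEq_of_mem (hIopen.mem_nhds hx) heq1
    rw [hev.deriv_eq]
    exact (hg1d x hx).deriv
  have heq2 : Set.EqOn (deriv (deriv g)) g2 I := hderiv2
  -- third derivative
  have hg2d : ∀ x ∈ I, HasDerivAt g2 (g3 x) x := by
    intro x hx
    have h0 : d x ≠ 0 := hden x hx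
    have := (hasDerivAt_const x (-2 * Q * A * c)).div ((hdd x).pow 3) (pow_ne_zero 3 h0)
    refine this.congr_deriv ?_
    simp only [hg3_def, Pi.pow_apply]
    field_simp [hg3_def]
    ring
  have hderiv3 : ∀ x ∈ I, deriv (deriv (deriv g)) x = g3 x := by
    intro x hx
    have hev : deriv (deriv g) =ᶠ[nhds x] g2 :=
      Filter.eventuallyEq_of_mem (hIopen.mem_nhds hx) heq2
    rw [hev.deriv_eq]
    exact (hg2d x hx).deriv
  -- split on m
  simp only [Set.mem_insert_iff, Set.mem_singleton_iff] at hm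
  rcases hm with hm | hm
  · -- m = 0 : f is constant
    have hfc : f = fun _ => K := by
      rw [hf, hm]; funext x; rw [Real.rpow_zero, mul_one]
    have hdf : deriv f = fun _ => (0 : ℝ) := by
      rw [hfc]; funext x; exact deriv_const x K
    have hdf0 : deriv (fun _ : ℝ => (0 : ℝ)) = fun _ => (0 : ℝ) := by
      funext x; exact deriv_const x 0
    have hd2f : deriv^[2] f = fun _ => (0 : ℝ) := by
      show deriv (deriv f) = _; rw [hdf, hdf0]
    have hd3f : deriv^[3] f = fun _ => (0 : ℝ) := by
      show deriv (deriv^[2] f) = _; rw [hd2f, hdf0]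
    have hd4f : deriv^[4] f = fun _ => (0 : ℝ) := by
      show deriv (deriv^[3] f) = _; rw [hd3f, hdf0]
    intro x hx
    have h0 : d x ≠ 0 := hden x hx
    have hg1x : g1 x ≠ 0 := div_ne_zero hc (pow_ne_zero 2 h0)
    refine ⟨by rw [heq1 hx]; exact hg1x, ?_, ?_⟩
    · unfold SatEqI
      have h3 : deriv^[3] g x = g3 x := hderiv3 x hx
      have h2 : deriv^[2] g x = g2 x := hderiv2 x hx
      rw [h3, h2, heq1 hx, hdf, hd2f, hfc]
      simp only [hg1_def, hg2_def, hg3_def]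
      field_simp
      ring
    · unfold SatEqII
      rw [hdf, hd2f, hd3f, hd4f, hfc]
      simp
  · -- m = 4
    have hfc : f = fun x => K * (A * x + B) ^ (4 : ℕ) := by
      rw [hf, hm]; funext x
      rw [show (4 : ℝ) = ((4 : ℕ) : ℝ) by norm_num, Real.rpow_natCast]
    set f1 : ℝ → ℝ := fun x => 4 * K * A * (A * x + B) ^ 3 with hf1_def
    set f2 : ℝ → ℝ := fun x => 12 * K * A ^ 2 * (A * x + B) ^ 2 with hf2_def
    set f3 : ℝ → ℝ := fun x => 24 * K * A ^ 3 * (A * x + B) with hf3_def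
    set f4 : ℝ → ℝ := fun x => 24 * K * A ^ 4 with hf4_def
    have hfd : ∀ x : ℝ, HasDerivAt f (f1 x) x := by
      intro x
      rw [hfc]
      have := ((hu x).pow 4).const_mul K
      refine this.congr_deriv ?_
      simp [hf1_def]; ring
    have hdf : deriv f = f1 := funext fun x => (hfd x).deriv
    have hf1d : ∀ x : ℝ, HasDerivAt f1 (f2 x) x := by
      intro x
      have := ((hu x).pow 3).const_mul (4 * K * A)
      refine this.congr_deriv ?_
      simp [hf2_def]; ring
    have hd2f : deriv^[2] f = f2 := by
      show deriv (deriv f) = _; rw [hdf]; exact funext fun x => (hf1d x).deriv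
    have hf2d : ∀ x : ℝ, HasDerivAt f2 (f3 x) x := by
      intro x
      have := ((hu x).pow 2).const_mul (12 * K * A ^ 2)
      refine this.congr_deriv ?_
      simp [hf3_def]; ring
    have hd3f : deriv^[3] f = f3 := by
      show deriv (deriv^[2] f) = _; rw [hd2f]; exact funext fun x => (hf2d x).deriv
    have hf3d : ∀ x : ℝ, HasDerivAt f3 (f4 x) x := by
      intro x
      have := (hu x).const_mul (24 * K * A ^ 3)
      refine this.congr_deriv ?_
      simp [hf4_def]; ring
    have hd4f : deriv^[4] f = f4 := by
      show deriv (deriv^[3] f) = _; rw [hd3f]; exact funext fun x => (hf3d x).deriv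
    intro x hx
    have h0 : d x ≠ 0 := hden x hx
    have hu0 : A * x + B ≠ 0 := (hIpos x hx).ne'
    have hK0 : K ≠ 0 := hK.ne'
    have hg1x : g1 x ≠ 0 := div_ne_zero hc (pow_ne_zero 2 h0)
    refine ⟨by rw [heq1 hx]; exact hg1x, ?_, ?_⟩
    · unfold SatEqI
      have h3 : deriv^[3] g x = g3 x := hderiv3 x hx
      have h2 : deriv^[2] g x = g2 x := hderiv2 x hx
      rw [h3, h2, heq1 hx, hdf, hd2f, hfc]
      simp only [hg1_def, hg2_def, hg3_def, hf1_def, hf2_def]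
      field_simp
      ring
    · unfold SatEqII
      rw [hdf, hd2f, hd3f, hd4f, hfc]
      simp only [hf1_def, hf2_def, hf3_def, hf4_def]
      field_simp
      ring
end

section
/- Let U : ℝ × ℝ → ℝ be smooth with ∂²U/∂T² + ∂⁴U/∂X⁴ = 0 on all of ℝ². Then the function u(t,x) := x·U(t, −1/x) satisfies the non-uniform Euler–Bernoulli equation ∂²/∂x²( x⁴·∂²u/∂x² ) + x^{−4}·∂²u/∂t² = 0 at every point (t,x) with x > 0. (This is a Gottlieb-type non-uniform beam, with flexural rigidity f(x) = x⁴ and lineal mass density m(x) = x^{−4}, reduced to the uniform unit beam.) -/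
private lemma hasDerivAt_negInv {x : ℝ} (hx : x ≠ 0) :
    HasDerivAt (fun y : ℝ => -1 / y) (1 / x ^ 2) x := by
  have h := (hasDerivAt_inv hx).neg
  have : (fun y : ℝ => -1 / y) = fun y : ℝ => -(y⁻¹) := by
    funext y; field_simp
  rw [this]
  refine h.congr_deriv ?_
  field_simp

private lemma step1 (V : ℝ → ℝ) (hV : ContDiff ℝ (⊤ : ℕ∞) V) {x : ℝ} (hx : 0 < x) :
    HasDerivAt (fun y => y * V (-1 / y)) (V (-1 / x) + deriv V (-1 / x) * x⁻¹) x := by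
  have hx0 : x ≠ 0 := ne_of_gt hx
  have h1 : HasDerivAt (fun y => V (-1 / y)) (deriv V (-1 / x) * (1 / x ^ 2)) x :=
    ((hV.differentiable (by simp) (-1 / x)).hasDerivAt).comp x (hasDerivAt_negInv hx0)
  have h := (hasDerivAt_id x).mul h1
  refine h.congr_deriv ?_
  simp only [id]
  field_simp

private lemma itd2 (g : ℝ → ℝ) : iteratedDeriv 2 g = deriv (deriv g) := by
  rw [show (2 : ℕ) = 1 + 1 from rfl, iteratedDeriv_succ, iteratedDeriv_one]

private lemma step2 (V : ℝ → ℝ) (hV : ContDiff ℝ (⊤ : ℕ∞) V) {x : ℝ} (hx : 0 < x) :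
    HasDerivAt (fun y => V (-1 / y) + deriv V (-1 / y) * y⁻¹)
      (iteratedDeriv 2 V (-1 / x) / x ^ 3) x := by
  have hx0 : x ≠ 0 := ne_of_gt hx
  have hV' : ContDiff ℝ (⊤ : ℕ∞) (deriv V) := by
    have := hV.iterate_deriv 1
    simpa using this
  have h1 : HasDerivAt (fun y => V (-1 / y)) (deriv V (-1 / x) * (1 / x ^ 2)) x :=
    ((hV.differentiable (by simp) (-1 / x)).hasDerivAt).comp x (hasDerivAt_negInv hx0)
  have h2 : HasDerivAt (fun y => deriv V (-1 / y)) (deriv (deriv V) (-1 / x) * (1 / x ^ 2)) x :=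
    ((hV'.differentiable (by simp) (-1 / x)).hasDerivAt).comp x (hasDerivAt_negInv hx0)
  have h3 : HasDerivAt (fun y : ℝ => y⁻¹) (-(x ^ 2)⁻¹) x := hasDerivAt_inv hx0
  have h := h1.add (h2.mul h3)
  refine h.congr_deriv ?_
  rw [itd2]
  field_simp
  ring

/-- main computation: second derivative of `y * V (-1/y)` at `x > 0`. -/
private lemma keyL (V : ℝ → ℝ) (hV : ContDiff ℝ (⊤ : ℕ∞) V) {x : ℝ} (hx : 0 < x) :
    deriv (deriv (fun y => y * V (-1 / y))) x = iteratedDeriv 2 V (-1 / x) / x ^ 3 := by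
  have hev : deriv (fun y => y * V (-1 / y)) =ᶠ[nhds x]
      (fun y => V (-1 / y) + deriv V (-1 / y) * y⁻¹) :=
    Filter.eventuallyEq_of_mem (Ioi_mem_nhds hx) (fun y hy => (step1 V hV hy).deriv)
  rw [hev.deriv_eq]
  exact (step2 V hV hx).deriv

/-- if `U` solves the uniform beam equation `U_TT + U_XXXX = 0` on `ℝ²`,
then `u(t,x) = x·U(t, −1/x)` solves the Gottlieb-type non-uniform beam equation
`(x⁴·u_xx)_xx + x^{−4}·u_tt = 0` for `x > 0`. -/
theorem statement14
    (U : ℝ → ℝ → ℝ)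
    (hU : ContDiff ℝ (⊤ : ℕ∞) (fun p : ℝ × ℝ => U p.1 p.2))
    (hUbeam : ∀ T X : ℝ,
      iteratedDeriv 2 (fun s => U s X) T + iteratedDeriv 4 (fun y => U T y) X = 0)
    (u : ℝ → ℝ → ℝ)
    (hu : u = fun t x => x * U t (-1 / x)) :
    ∀ t x : ℝ, 0 < x →
      deriv (deriv (fun y => y^4 * iteratedDeriv 2 (fun y' => u t y') y)) x
        + x ^ (-4 : ℤ) * iteratedDeriv 2 (fun s => u s x) t = 0 := by
  intro t x hx
  have hx0 : x ≠ 0 := ne_of_gt hx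
  subst hu
  -- V = U t is smooth
  set V : ℝ → ℝ := fun y => U t y with hVdef
  have hV : ContDiff ℝ (⊤ : ℕ∞) V := by
    have : V = (fun p : ℝ × ℝ => U p.1 p.2) ∘ (fun y : ℝ => (t, y)) := rfl
    rw [this]
    exact hU.comp (contDiff_const.prodMk contDiff_id)
  set W : ℝ → ℝ := iteratedDeriv 2 V with hWdef
  have hW : ContDiff ℝ (⊤ : ℕ∞) W := by
    have := hV.iterate_deriv 2
    simpa [hWdef, iteratedDeriv_eq_iterate] using this
  -- spatial part
  have hsp : ∀ y : ℝ, 0 < y →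
      iteratedDeriv 2 (fun y' => y' * U t (-1 / y')) y = W (-1 / y) / y ^ 3 := by
    intro y hy
    rw [itd2]
    exact keyL V hV hy
  have hev : (fun y => y ^ 4 * iteratedDeriv 2 (fun y' => y' * U t (-1 / y')) y)
      =ᶠ[nhds x] (fun y => y * W (-1 / y)) := by
    refine Filter.eventuallyEq_of_mem (Ioi_mem_nhds hx) (fun y hy => ?_)
    have hy : (0:ℝ) < y := hy
    rw [hsp y hy]
    field_simp
  have hspatial : deriv (deriv (fun y => y ^ 4 *
      iteratedDeriv 2 (fun y' => y' * U t (-1 / y')) y)) x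
      = iteratedDeriv 4 V (-1 / x) / x ^ 3 := by
    rw [(hev.deriv).deriv_eq, keyL W hW hx]
    congr 1
    rw [hWdef]
    simp [iteratedDeriv_eq_iterate, ← Function.iterate_add_apply]
  -- time part
  have hf : ContDiff ℝ (⊤ : ℕ∞) (fun s => U s (-1 / x)) := by
    have : (fun s => U s (-1 / x)) = (fun p : ℝ × ℝ => U p.1 p.2) ∘ (fun s : ℝ => (s, -1 / x)) :=
      rfl
    rw [this]
    exact hU.comp (contDiff_id.prodMk contDiff_const)
  have hf' : ContDiff ℝ (⊤ : ℕ∞) (deriv (fun s => U s (-1 / x))) := by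
    have := hf.iterate_deriv 1
    simpa using this
  have htime : iteratedDeriv 2 (fun s => x * U s (-1 / x)) t
      = x * iteratedDeriv 2 (fun s => U s (-1 / x)) t := by
    have hd1 : deriv (fun s => x * U s (-1 / x)) = fun s => x * deriv (fun s' => U s' (-1 / x)) s :=
      funext fun s => deriv_const_mul x (hf.differentiable (by simp) s)
    rw [itd2, itd2, hd1]
    exact deriv_const_mul x (hf'.differentiable (by simp) t)
  rw [hspatial, htime]
  have hbeam := hUbeam t (-1 / x)
  have hrw : iteratedDeriv 2 (fun s => U s (-1 / x)) t = -iteratedDeriv 4 V (-1 / x) := by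
    linarith [hbeam]
  rw [hrw]
  rw [zpow_neg, zpow_ofNat]
  field_simp
  ring
end
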